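/- Let G be a non-complete 3-regular (cubic) finite simple graph of order n. Then gp(μ(G)) ≥ n + 1 if and only if G is isomorphic to the graph G(3), defined as follows: take disjoint vertex sets V1 = {u1,u2,u3}, V2 = {v1,v2,v3}, V4 = {w1,w2}; add all edges between V1 and V4; make V2 a triangle; and add the matching edges u_i v_i for i = 1,2,3. -/

import Mathlib

open SimpleGraph

variable {V : Type*}

/-- The Mycielskian of a graph `G`: vertices are `some (Sum.inl v)` (original vertices),
`some (Sum.inr v)` (twin vertices), and `none` (the root `u*`). -/
def Mycielskian (G : SimpleGraph V) : SimpleGraph (Option (V ⊕ V)) :=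
  SimpleGraph.fromRel (fun x y =>
    (∃ u v, G.Adj u v ∧ x = some (Sum.inl u) ∧ y = some (Sum.inl v)) ∨
    (∃ u v, G.Adj u v ∧ x = some (Sum.inl u) ∧ y = some (Sum.inr v)) ∨
    (∃ u, x = some (Sum.inr u) ∧ y = none))

namespace MycHelp

/-- original vertex -/
abbrev oV (v : V) : Option (V ⊕ V) := some (Sum.inl v)
/-- twin vertex -/
abbrev tV (v : V) : Option (V ⊕ V) := some (Sum.inr v)

variable {G : SimpleGraph V}

@[simp] lemma adj_oo {u v : V} : (Mycielskian G).Adj (oV u) (oV v) ↔ G.Adj u v := by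
  simp only [Mycielskian, fromRel_adj]
  constructor
  · rintro ⟨hne, h | h⟩ <;>
      rcases h with (⟨a,b,hab,h1,h2⟩|⟨a,b,hab,h1,h2⟩|⟨a,h1,h2⟩) <;> simp_all <;>
      exact hab.symm
  · intro h
    exact ⟨by simp [h.ne], Or.inl (Or.inl ⟨u, v, h, rfl, rfl⟩)⟩

@[simp] lemma adj_ot {u v : V} : (Mycielskian G).Adj (oV u) (tV v) ↔ G.Adj u v := by
  simp only [Mycielskian, fromRel_adj]
  constructor
  · rintro ⟨hne, h | h⟩ <;>
      rcases h with (⟨a,b,hab,h1,h2⟩|⟨a,b,hab,h1,h2⟩|⟨a,h1,h2⟩) <;> simp_all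
  · intro h
    exact ⟨by simp, Or.inl (Or.inr (Or.inl ⟨u, v, h, rfl, rfl⟩))⟩

@[simp] lemma adj_to {u v : V} : (Mycielskian G).Adj (tV u) (oV v) ↔ G.Adj v u := by
  rw [adj_comm, adj_ot]

@[simp] lemma adj_tt {u v : V} : ¬ (Mycielskian G).Adj (tV u) (tV v) := by
  simp only [Mycielskian, fromRel_adj]
  rintro ⟨hne, h | h⟩ <;>
    rcases h with (⟨a,b,hab,h1,h2⟩|⟨a,b,hab,h1,h2⟩|⟨a,h1,h2⟩) <;> simp_all

@[simp] lemma adj_ts {u : V} : (Mycielskian G).Adj (tV u) none := by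
  simp only [Mycielskian, fromRel_adj]
  refine ⟨by simp, Or.inl (Or.inr (Or.inr ⟨u, rfl, trivial⟩))⟩

@[simp] lemma adj_st {u : V} : (Mycielskian G).Adj none (tV u) := adj_ts.symm

@[simp] lemma adj_os {u : V} : ¬ (Mycielskian G).Adj (oV u) none := by
  simp only [Mycielskian, fromRel_adj]
  rintro ⟨hne, h | h⟩ <;>
    rcases h with (⟨a,b,hab,h1,h2⟩|⟨a,b,hab,h1,h2⟩|⟨a,h1,h2⟩) <;> simp_all

@[simp] lemma adj_so {u : V} : ¬ (Mycielskian G).Adj none (oV u) := fun h => adj_os h.symm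

/-- Anything adjacent to an original vertex is an original or twin with G-adjacency. -/
lemma adj_o_cases {u : V} {z : Option (V ⊕ V)} (h : (Mycielskian G).Adj (oV u) z) :
    (∃ w, z = oV w ∧ G.Adj u w) ∨ (∃ w, z = tV w ∧ G.Adj u w) := by
  match z with
  | none => exact absurd h adj_os
  | some (Sum.inl w) => exact Or.inl ⟨w, rfl, adj_oo.mp h⟩
  | some (Sum.inr w) => exact Or.inr ⟨w, rfl, adj_ot.mp h⟩

lemma adj_t_cases {u : V} {z : Option (V ⊕ V)} (h : (Mycielskian G).Adj (tV u) z) :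
    (∃ w, z = oV w ∧ G.Adj u w) ∨ z = none := by
  match z with
  | none => exact Or.inr rfl
  | some (Sum.inl w) => exact Or.inl ⟨w, rfl, (adj_to.mp h).symm⟩
  | some (Sum.inr w) => exact absurd h adj_tt

end MycHelp

/-- `S` is a general position set: no shortest path between two vertices of `S`
contains a third element of `S`. -/
def IsGPSet (G : SimpleGraph V) (S : Set V) : Prop :=
  ∀ u ∈ S, ∀ v ∈ S, ∀ p : G.Walk u v, p.length = G.dist u v →
    ∀ w ∈ S, w ∈ p.support → w = u ∨ w = v

section WalkHelp

variable {W : Type*} {H : SimpleGraph W}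

lemma support_of_length_one {a b : W} (p : H.Walk a b) (h : p.length = 1) :
    ∀ w ∈ p.support, w = a ∨ w = b := by
  cases p with
  | nil => simp at h
  | cons hadj q =>
    cases q with
    | nil => intro w hw; simp at hw; rcases hw with h|h <;> simp [h]
    | cons h2 q2 => simp [SimpleGraph.Walk.length_cons] at h

lemma length_two_struct {a b : W} (p : H.Walk a b) (h : p.length = 2) :
    ∃ m, H.Adj a m ∧ H.Adj m b ∧ p.support = [a, m, b] := by
  cases p with
  | nil => simp at h
  | cons h1 q =>
    cases q with
    | nil => simp at h
    | cons h2 q2 =>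
      cases q2 with
      | nil => exact ⟨_, h1, h2, by simp⟩
      | cons h3 q3 => simp [SimpleGraph.Walk.length_cons] at h

lemma two_le_length {a b : W} (hne : a ≠ b) (hnadj : ¬ H.Adj a b) (p : H.Walk a b) :
    2 ≤ p.length := by
  cases p with
  | nil => exact absurd rfl hne
  | cons h1 q =>
    cases q with
    | nil => exact absurd h1 hnadj
    | cons h2 q2 => simp only [SimpleGraph.Walk.length_cons]; omega

lemma three_le_length {a b : W} (hne : a ≠ b) (hnadj : ¬ H.Adj a b)
    (hnc : ∀ z, ¬ (H.Adj a z ∧ H.Adj z b)) (p : H.Walk a b) : 3 ≤ p.length := by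
  cases p with
  | nil => exact absurd rfl hne
  | cons h1 q =>
    cases q with
    | nil => exact absurd h1 hnadj
    | cons h2 q2 =>
      cases q2 with
      | nil => exact absurd ⟨h1, h2⟩ (hnc _)
      | cons h3 q3 => simp only [SimpleGraph.Walk.length_cons]; omega

lemma four_le_length {a b : W} (hne : a ≠ b) (hnadj : ¬ H.Adj a b)
    (hnc : ∀ z, ¬ (H.Adj a z ∧ H.Adj z b))
    (hnp : ∀ z w, ¬ (H.Adj a z ∧ H.Adj z w ∧ H.Adj w b)) (p : H.Walk a b) :
    4 ≤ p.length := by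
  cases p with
  | nil => exact absurd rfl hne
  | cons h1 q =>
    cases q with
    | nil => exact absurd h1 hnadj
    | cons h2 q2 =>
      cases q2 with
      | nil => exact absurd ⟨h1, h2⟩ (hnc _)
      | cons h3 q3 =>
        cases q3 with
        | nil => exact absurd ⟨h1, h2, h3⟩ (hnp _ _)
        | cons h4 q4 => simp only [SimpleGraph.Walk.length_cons]; omega

lemma dist_eq_of_lb {a b : W} (p : H.Walk a b) {L : ℕ} (hp : p.length = L)
    (hlb : ∀ q : H.Walk a b, L ≤ q.length) : H.dist a b = L := by
  have h1 : H.dist a b ≤ L := hp ▸ SimpleGraph.dist_le p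
  obtain ⟨q, hq⟩ := p.reachable.exists_walk_length_eq_dist
  have := hlb q
  omega

lemma gp_violation {S : Set W} (hGP : IsGPSet H S) {a b : W} (ha : a ∈ S) (hb : b ∈ S)
    (p : H.Walk a b) {L : ℕ} (hp : p.length = L) (hlb : ∀ q : H.Walk a b, L ≤ q.length)
    {z : W} (hz : z ∈ S) (hzs : z ∈ p.support) (hza : z ≠ a) (hzb : z ≠ b) : False := by
  have hd := dist_eq_of_lb p hp hlb
  rcases hGP a ha b hb p (by rw [hp, hd]) z hz hzs with h | h
  exacts [hza h, hzb h]

end WalkHelp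

namespace MycHelp

variable {G : SimpleGraph V} {S : Set (Option (V ⊕ V))}

/-- No μ-neighbor common to `oV u` and `tV v` when `u,v` are nonadjacent with no common
neighbor. -/
lemma no_common_ot {u v : V} (hnc : ∀ c, ¬ (G.Adj u c ∧ G.Adj c v)) :
    ∀ z, ¬ ((Mycielskian G).Adj (oV u) z ∧ (Mycielskian G).Adj z (tV v)) := by
  rintro z ⟨h1, h2⟩
  rcases adj_o_cases h1 with ⟨c, rfl, hc⟩ | ⟨c, rfl, hc⟩
  · exact hnc c ⟨hc, adj_ot.mp h2⟩
  · exact adj_tt h2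

lemma no_common_oo {u v : V} (hnc : ∀ c, ¬ (G.Adj u c ∧ G.Adj c v)) :
    ∀ z, ¬ ((Mycielskian G).Adj (oV u) z ∧ (Mycielskian G).Adj z (oV v)) := by
  rintro z ⟨h1, h2⟩
  rcases adj_o_cases h1 with ⟨c, rfl, hc⟩ | ⟨c, rfl, hc⟩
  · exact hnc c ⟨hc, adj_oo.mp h2⟩
  · exact hnc c ⟨hc, (adj_to.mp h2).symm⟩

lemma no_path3_oo {u v : V} (hnc : ∀ c, ¬ (G.Adj u c ∧ G.Adj c v))
    (hnp : ∀ c d, ¬ (G.Adj u c ∧ G.Adj c d ∧ G.Adj d v)) :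
    ∀ z w, ¬ ((Mycielskian G).Adj (oV u) z ∧ (Mycielskian G).Adj z w ∧
      (Mycielskian G).Adj w (oV v)) := by
  rintro z w ⟨h1, h2, h3⟩
  rcases adj_o_cases h1 with ⟨c, rfl, hc⟩ | ⟨c, rfl, hc⟩
  · rcases adj_o_cases h2 with ⟨d, rfl, hd⟩ | ⟨d, rfl, hd⟩
    · exact hnp c d ⟨hc, hd, adj_oo.mp h3⟩
    · exact hnp c d ⟨hc, hd, (adj_to.mp h3).symm⟩
  · rcases adj_t_cases h2 with ⟨d, rfl, hd⟩ | rfl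
    · exact hnp c d ⟨hc, hd, adj_oo.mp h3⟩
    · exact adj_so h3

/-- P1 : if `u` and its twin are in `S`, no neighbor of `u` is original in `S`. -/
lemma P1 (hGP : IsGPSet (Mycielskian G) S) {u w : V} (hu : oV u ∈ S) (hu' : tV u ∈ S)
    (hw : G.Adj u w) : oV w ∉ S := fun hwS =>
  gp_violation hGP hu hu'
    (SimpleGraph.Walk.cons (adj_oo.mpr hw)
      (SimpleGraph.Walk.cons (adj_ot.mpr hw.symm) SimpleGraph.Walk.nil))
    (by simp)
    (two_le_length (by simp) (by simp))
    hwS (by simp) (by simp [hw.ne']) (by simp)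

/-- P2 : a common neighbor of two vertices with twins in `S` is not original in `S`. -/
lemma P2 (hGP : IsGPSet (Mycielskian G) S) {p q w : V} (hp : tV p ∈ S) (hq : tV q ∈ S)
    (hpq : p ≠ q) (h1 : G.Adj w p) (h2 : G.Adj w q) : oV w ∉ S := fun hwS =>
  gp_violation hGP hp hq
    (SimpleGraph.Walk.cons (adj_to.mpr h1)
      (SimpleGraph.Walk.cons (adj_ot.mpr h2) SimpleGraph.Walk.nil))
    (by simp)
    (two_le_length (by simp [hpq]) (by simp))
    hwS (by simp) (by simp) (by simp)

/-- P3 : common neighbors of two nonadjacent originals in `S` are fully excluded. -/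
lemma P3 (hGP : IsGPSet (Mycielskian G) S) {u v w : V} (hu : oV u ∈ S) (hv : oV v ∈ S)
    (hne : u ≠ v) (hnadj : ¬ G.Adj u v) (h1 : G.Adj u w) (h2 : G.Adj w v) :
    oV w ∉ S ∧ tV w ∉ S := by
  have hwu : w ≠ u := h1.ne'
  have hwv : w ≠ v := h2.ne
  constructor
  · exact fun hwS => gp_violation hGP hu hv
      (SimpleGraph.Walk.cons (adj_oo.mpr h1)
        (SimpleGraph.Walk.cons (adj_oo.mpr h2) SimpleGraph.Walk.nil))
      (by simp) (two_le_length (by simp [hne]) (by simp [hnadj]))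
      hwS (by simp) (by simp [hwu]) (by simp [hwv])
  · exact fun hwS => gp_violation hGP hu hv
      (SimpleGraph.Walk.cons (adj_ot.mpr h1)
        (SimpleGraph.Walk.cons (adj_to.mpr h2.symm) SimpleGraph.Walk.nil))
      (by simp) (two_le_length (by simp [hne]) (by simp [hnadj]))
      hwS (by simp) (by simp) (by simp)

/-- P4 : common neighbors of a nonadjacent (original, twin) pair in `S` are not original
in `S`. -/
lemma P4 (hGP : IsGPSet (Mycielskian G) S) {u v w : V} (hu : oV u ∈ S) (hv : tV v ∈ S)
    (hne : u ≠ v) (hnadj : ¬ G.Adj u v) (h1 : G.Adj u w) (h2 : G.Adj w v) : oV w ∉ S :=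
  fun hwS => gp_violation hGP hu hv
    (SimpleGraph.Walk.cons (adj_oo.mpr h1)
      (SimpleGraph.Walk.cons (adj_ot.mpr h2) SimpleGraph.Walk.nil))
    (by simp) (two_le_length (by simp) (by simp [hnadj]))
    hwS (by simp) (by simp [h1.ne']) (by simp)

/-- P5 ("ball") : if `u ∈ A` has a `B`-neighbor `x`, then every `v ∈ B` is within
distance 2 of `u`. -/
lemma Pball (hGP : IsGPSet (Mycielskian G) S) {u x v : V} (hu : oV u ∈ S) (hx : tV x ∈ S)
    (hux : G.Adj u x) (hv : tV v ∈ S) (hne : u ≠ v) (hnadj : ¬ G.Adj u v)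
    (hnc : ∀ c, ¬ (G.Adj u c ∧ G.Adj c v)) : False := by
  have hxv : x ≠ v := fun h => hnadj (h ▸ hux)
  exact gp_violation hGP hu hv
    (SimpleGraph.Walk.cons (adj_ot.mpr hux)
      (SimpleGraph.Walk.cons adj_ts (SimpleGraph.Walk.cons adj_st SimpleGraph.Walk.nil)))
    (by simp)
    (three_le_length (by simp) (by simp [hnadj]) (no_common_ot hnc))
    hx (by simp) (by simp) (by simp [hxv])

/-- P5c : if `u ∈ A`, `v ∈ B` are at distance ≥ 3, the middle-far vertex of any
3-path from `u` to `v` is not original in `S`. -/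
lemma P5c (hGP : IsGPSet (Mycielskian G) S) {u v w y : V} (hu : oV u ∈ S) (hv : tV v ∈ S)
    (hnadj : ¬ G.Adj u v) (hnc : ∀ c, ¬ (G.Adj u c ∧ G.Adj c v))
    (h1 : G.Adj u w) (h2 : G.Adj w y) (h3 : G.Adj y v) (hyS : oV y ∈ S) : False := by
  have hne : u ≠ v := by rintro rfl; exact hnc y ⟨h3.symm, h3⟩
  have hyu : y ≠ u := by rintro rfl; exact hnadj h3
  exact gp_violation hGP hu hv
    (SimpleGraph.Walk.cons (adj_oo.mpr h1)
      (SimpleGraph.Walk.cons (adj_oo.mpr h2)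
        (SimpleGraph.Walk.cons (adj_ot.mpr h3) SimpleGraph.Walk.nil)))
    (by simp)
    (three_le_length (by simp) (by simp [hnadj]) (no_common_ot hnc))
    hyS (by simp) (by simp [hyu]) (by simp)

/-- P6 : if `u, v ∈ A` are at distance ≥ 4, then no neighbor of `u` has its twin in
`S`.  `y` is any neighbor of `v`. -/
lemma P6 (hGP : IsGPSet (Mycielskian G) S) {u v w y : V} (hu : oV u ∈ S) (hv : oV v ∈ S)
    (hne : u ≠ v) (hnadj : ¬ G.Adj u v) (hnc : ∀ c, ¬ (G.Adj u c ∧ G.Adj c v))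
    (hnp : ∀ c d, ¬ (G.Adj u c ∧ G.Adj c d ∧ G.Adj d v))
    (hw : G.Adj u w) (hwB : tV w ∈ S) (hy : G.Adj v y) : False :=
  gp_violation hGP hu hv
    (SimpleGraph.Walk.cons (adj_ot.mpr hw)
      (SimpleGraph.Walk.cons adj_ts
        (SimpleGraph.Walk.cons adj_st
          (SimpleGraph.Walk.cons (adj_to.mpr hy) SimpleGraph.Walk.nil))))
    (by simp)
    (four_le_length (by simp [hne]) (by simp [hnadj]) (no_common_oo hnc)
      (no_path3_oo hnc hnp))
    hwB (by simp) (by simp) (by simp)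

/-- P7 : interior vertices of 3-paths between originals in `S` at distance 3 are fully
excluded. -/
lemma P7 (hGP : IsGPSet (Mycielskian G) S) {u v a b : V} (hu : oV u ∈ S) (hv : oV v ∈ S)
    (hne : u ≠ v) (hnadj : ¬ G.Adj u v) (hnc : ∀ c, ¬ (G.Adj u c ∧ G.Adj c v))
    (h1 : G.Adj u a) (h2 : G.Adj a b) (h3 : G.Adj b v) :
    oV a ∉ S ∧ tV a ∉ S ∧ oV b ∉ S ∧ tV b ∉ S := by
  have hau : a ≠ u := h1.ne'
  have hav : a ≠ v := by rintro rfl; exact hnadj h1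
  have hbu : b ≠ u := by rintro rfl; exact hnadj h3
  have hbv : b ≠ v := h3.ne
  have lb := three_le_length (a := oV u) (b := oV v) (H := Mycielskian G)
    (by simp [hne]) (by simp [hnadj]) (no_common_oo hnc)
  refine ⟨fun hS => ?_, fun hS => ?_, fun hS => ?_, fun hS => ?_⟩
  · exact gp_violation hGP hu hv
      (SimpleGraph.Walk.cons (adj_oo.mpr h1)
        (SimpleGraph.Walk.cons (adj_oo.mpr h2)
          (SimpleGraph.Walk.cons (adj_oo.mpr h3) SimpleGraph.Walk.nil)))
      (by simp) lb hS (by simp) (by simp [hau]) (by simp [hav])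
  · exact gp_violation hGP hu hv
      (SimpleGraph.Walk.cons (adj_ot.mpr h1)
        (SimpleGraph.Walk.cons (adj_to.mpr h2.symm)
          (SimpleGraph.Walk.cons (adj_oo.mpr h3) SimpleGraph.Walk.nil)))
      (by simp) lb hS (by simp) (by simp) (by simp)
  · exact gp_violation hGP hu hv
      (SimpleGraph.Walk.cons (adj_oo.mpr h1)
        (SimpleGraph.Walk.cons (adj_oo.mpr h2)
          (SimpleGraph.Walk.cons (adj_oo.mpr h3) SimpleGraph.Walk.nil)))
      (by simp) lb hS (by simp) (by simp [hbu]) (by simp [hbv])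
  · exact gp_violation hGP hu hv
      (SimpleGraph.Walk.cons (adj_oo.mpr h1)
        (SimpleGraph.Walk.cons (adj_ot.mpr h2)
          (SimpleGraph.Walk.cons (adj_to.mpr h3.symm) SimpleGraph.Walk.nil)))
      (by simp) lb hS (by simp) (by simp) (by simp)

/-- C1a : two twins in `S` forbid the root being in `S`. -/
lemma C1a (hGP : IsGPSet (Mycielskian G) S) {x y : V} (hx : tV x ∈ S) (hy : tV y ∈ S)
    (hxy : x ≠ y) (hs : none ∈ S) : False :=
  gp_violation hGP hx hy
    (SimpleGraph.Walk.cons adj_ts (SimpleGraph.Walk.cons adj_st SimpleGraph.Walk.nil))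
    (by simp) (two_le_length (by simp [hxy]) (by simp))
    hs (by simp) (by simp) (by simp)

/-- C1b : an original in `S` plus the root in `S` forbid twins of its neighbors. -/
lemma C1b (hGP : IsGPSet (Mycielskian G) S) {u w : V} (hu : oV u ∈ S) (hs : none ∈ S)
    (hw : G.Adj u w) (hwS : tV w ∈ S) : False :=
  gp_violation hGP hu hs
    (SimpleGraph.Walk.cons (adj_ot.mpr hw) (SimpleGraph.Walk.cons adj_ts SimpleGraph.Walk.nil))
    (by simp) (two_le_length (by simp) (by simp))
    hwS (by simp) (by simp) (by simp)

/-- C1c : two originals at distance ≥ 4 in `S` forbid the root being in `S`. -/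
lemma C1c (hGP : IsGPSet (Mycielskian G) S) {x y w z : V} (hx : oV x ∈ S) (hy : oV y ∈ S)
    (hs : none ∈ S) (hne : x ≠ y) (hnadj : ¬ G.Adj x y)
    (hnc : ∀ c, ¬ (G.Adj x c ∧ G.Adj c y))
    (hnp : ∀ c d, ¬ (G.Adj x c ∧ G.Adj c d ∧ G.Adj d y))
    (hw : G.Adj x w) (hz : G.Adj y z) : False :=
  gp_violation hGP hx hy
    (SimpleGraph.Walk.cons (adj_ot.mpr hw)
      (SimpleGraph.Walk.cons adj_ts
        (SimpleGraph.Walk.cons adj_st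
          (SimpleGraph.Walk.cons (adj_to.mpr hz) SimpleGraph.Walk.nil))))
    (by simp)
    (four_le_length (by simp [hne]) (by simp [hnadj]) (no_common_oo hnc)
      (no_path3_oo hnc hnp))
    hs (by simp) (by simp) (by simp)

end MycHelp

section Deg3

variable {G : SimpleGraph V} [Fintype V] [DecidableEq V] [DecidableRel G.Adj]

lemma deg3_full {r u v w x : V} (hdeg : (G.neighborFinset r).card = 3)
    (h1 : G.Adj r u) (h2 : G.Adj r v) (h3 : G.Adj r w)
    (huv : u ≠ v) (huw : u ≠ w) (hvw : v ≠ w) (hx : G.Adj r x) :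
    x = u ∨ x = v ∨ x = w := by
  by_contra hcon
  push_neg at hcon
  obtain ⟨hxu, hxv, hxw⟩ := hcon
  have hsub : ({x, u, v, w} : Finset V) ⊆ G.neighborFinset r := by
    intro m hm
    simp only [Finset.mem_insert, Finset.mem_singleton] at hm
    rcases hm with rfl|rfl|rfl|rfl <;> simp [SimpleGraph.mem_neighborFinset, hx, h1, h2, h3]
  have hc4 : ({x, u, v, w} : Finset V).card = 4 := by
    rw [Finset.card_insert_of_notMem (by simp [hxu, hxv, hxw]),
        Finset.card_insert_of_notMem (by simp [huv, huw]),
        Finset.card_insert_of_notMem (by simp [hvw]), Finset.card_singleton]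
  have := Finset.card_le_card hsub
  omega

lemma four_nbrs {r u v w x : V} (hdeg : (G.neighborFinset r).card = 3)
    (h1 : G.Adj r u) (h2 : G.Adj r v) (h3 : G.Adj r w) (hx : G.Adj r x)
    (huv : u ≠ v) (huw : u ≠ w) (hux : u ≠ x) (hvw : v ≠ w) (hvx : v ≠ x)
    (hwx : w ≠ x) : False := by
  rcases deg3_full hdeg h1 h2 h3 huv huw hvw hx with rfl|rfl|rfl <;> simp_all

lemma exists_nbr (hdeg : (G.neighborFinset r).card = 3) : ∃ y, G.Adj r y := by
  have : (G.neighborFinset r).Nonempty := Finset.card_pos.mp (by omega)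
  obtain ⟨y, hy⟩ := this
  exact ⟨y, (SimpleGraph.mem_neighborFinset _ _ _).mp hy⟩

end Deg3

namespace MycHelp

variable {G : SimpleGraph V} {S : Set (Option (V ⊕ V))}
variable [Fintype V] [DecidableEq V] [DecidableRel G.Adj]

/-- The overflow argument: `u ∈ C₁` with neighbors `xu ∈ B`, `p, q`; if `b1 b2 b3` are
three distinct `B`-vertices not adjacent to any of `u, p, q`, then `xu` would need
degree 4. -/
lemma overflow (hGP : IsGPSet (Mycielskian G) S)
    (hdeg : ∀ z : V, (G.neighborFinset z).card = 3)
    {u xu p q b1 b2 b3 : V}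
    (hu : oV u ∈ S) (hxu : tV xu ∈ S) (hadjx : G.Adj u xu)
    (hup : G.Adj u p) (huq : G.Adj u q)
    (hxp : xu ≠ p) (hxq : xu ≠ q) (hpq : p ≠ q)
    (hb : ∀ b ∈ [b1, b2, b3], tV b ∈ S ∧ b ≠ u ∧ ¬G.Adj u b ∧ ¬G.Adj p b ∧ ¬G.Adj q b)
    (h12 : b1 ≠ b2) (h13 : b1 ≠ b3) (h23 : b2 ≠ b3) : False := by
  have key : ∀ b ∈ [b1, b2, b3], G.Adj xu b := by
    intro b hbmem
    obtain ⟨hbS, hbu, hbadj, hbp, hbq⟩ := hb b hbmem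
    by_contra hnadjx
    have hcom : ∃ c, G.Adj u c ∧ G.Adj c b := by
      by_contra hnc
      push_neg at hnc
      exact Pball hGP hu hxu hadjx hbS (Ne.symm hbu) hbadj (fun c hc => hnc c hc.1 hc.2)
    obtain ⟨c, hc1, hc2⟩ := hcom
    rcases deg3_full (hdeg u) hadjx hup huq hxp hxq hpq hc1 with rfl|rfl|rfl
    · exact hnadjx hc2
    · exact hbp hc2
    · exact hbq hc2
  have k1 := key b1 (by simp)
  have k2 := key b2 (by simp)
  have k3 := key b3 (by simp)
  have n1 := (hb b1 (by simp)).2.1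
  have n2 := (hb b2 (by simp)).2.1
  have n3 := (hb b3 (by simp)).2.1
  exact four_nbrs (hdeg xu) hadjx.symm k1 k2 k3
    (Ne.symm n1) (Ne.symm n2) (Ne.symm n3) h12 h13 h23
end MycHelp

/-- The general position number of `G`: the maximum cardinality of a general position set. -/
noncomputable def gpNumber (G : SimpleGraph V) [Fintype V] : ℕ :=
  sSup {k | ∃ S : Set V, IsGPSet G S ∧ S.ncard = k}

/-- A gp-set: a general position set of maximum cardinality. -/
def IsGpSet (G : SimpleGraph V) [Fintype V] (S : Set V) : Prop :=
  IsGPSet G S ∧ S.ncard = gpNumber G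

/-- `G` is a `d`-regular graph: every vertex has degree `d`. -/
def IsRegularDeg (G : SimpleGraph V) (d : ℕ) : Prop :=
  ∀ v : V, (G.neighborSet v).ncard = d

/-- The graph `G(d)`: vertex sets `V1 = Fin d` (left), `V2 = Fin d` (middle) and
`V4 = Fin (d-1)` (right); all edges between `V1` and `V4`, `V2` a clique, and a
perfect matching between `V1` and `V2`. -/
def Gd (d : ℕ) : SimpleGraph (Fin d ⊕ (Fin d ⊕ Fin (d - 1))) :=
  SimpleGraph.fromRel (fun x y =>
    (∃ i j, x = Sum.inl i ∧ y = Sum.inr (Sum.inr j)) ∨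
    (∃ i j, x = Sum.inr (Sum.inl i) ∧ y = Sum.inr (Sum.inl j)) ∨
    (∃ i, x = Sum.inl i ∧ y = Sum.inr (Sum.inl i)))

set_option synthInstance.maxSize 1000 in
instance {d : ℕ} : DecidableRel (Gd d).Adj := fun a b =>
  decidable_of_iff _ (SimpleGraph.fromRel_adj _ a b).symm

namespace MycHelp

variable {G : SimpleGraph V} {S : Set (Option (V ⊕ V))}
variable [Fintype V] [DecidableEq V] [DecidableRel G.Adj]

set_option maxHeartbeats 2000000 in
lemma endgame (hGP : IsGPSet (Mycielskian G) S)
    (hdeg : ∀ z : V, (G.neighborFinset z).card = 3)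
    {u v w xu xv xw r s : V}
    (huS : oV u ∈ S) (huS' : tV u ∈ S) (hvS : oV v ∈ S) (hvS' : tV v ∈ S)
    (hwS : oV w ∈ S) (hwS' : tV w ∈ S)
    (huv : u ≠ v) (huw : u ≠ w) (hvw : v ≠ w)
    (hxuS : tV xu ∈ S) (hxuS' : oV xu ∉ S)
    (hxvS : tV xv ∈ S) (hxvS' : oV xv ∉ S)
    (hxwS : tV xw ∈ S) (hxwS' : oV xw ∉ S)
    (hxuv : xu ≠ xv) (hxuw : xu ≠ xw) (hxvw : xv ≠ xw)
    (hrS : oV r ∉ S) (hrS' : tV r ∉ S) (hsS : oV s ∉ S) (hsS' : tV s ∉ S) (hrs : r ≠ s)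
    (haxu : G.Adj u xu) (haxv : G.Adj v xv) (haxw : G.Adj w xw)
    (hur : G.Adj u r) (hus : G.Adj u s) (hvr : G.Adj v r) (hvs : G.Adj v s)
    (hwr : G.Adj w r) (hws : G.Adj w s)
    (hC3 : ∀ z, oV z ∈ S → tV z ∈ S → z = u ∨ z = v ∨ z = w)
    (hD2 : ∀ d, oV d ∉ S → tV d ∉ S → d = r ∨ d = s) :
    Nonempty (G ≃g Gd 3) := by
  have hne_u_xu : u ≠ xu := fun h => hxuS' (h ▸ huS)
  have hne_u_xv : u ≠ xv := fun h => hxvS' (h ▸ huS)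
  have hne_u_xw : u ≠ xw := fun h => hxwS' (h ▸ huS)
  have hne_u_r : u ≠ r := fun h => hrS (h ▸ huS)
  have hne_u_s : u ≠ s := fun h => hsS (h ▸ huS)
  have hne_v_xu : v ≠ xu := fun h => hxuS' (h ▸ hvS)
  have hne_v_xv : v ≠ xv := fun h => hxvS' (h ▸ hvS)
  have hne_v_xw : v ≠ xw := fun h => hxwS' (h ▸ hvS)
  have hne_v_r : v ≠ r := fun h => hrS (h ▸ hvS)
  have hne_v_s : v ≠ s := fun h => hsS (h ▸ hvS)
  have hne_w_xu : w ≠ xu := fun h => hxuS' (h ▸ hwS)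
  have hne_w_xv : w ≠ xv := fun h => hxvS' (h ▸ hwS)
  have hne_w_xw : w ≠ xw := fun h => hxwS' (h ▸ hwS)
  have hne_w_r : w ≠ r := fun h => hrS (h ▸ hwS)
  have hne_w_s : w ≠ s := fun h => hsS (h ▸ hwS)
  have hne_xu_r : xu ≠ r := fun h => hrS' (h ▸ hxuS)
  have hne_xu_s : xu ≠ s := fun h => hsS' (h ▸ hxuS)
  have hne_xv_r : xv ≠ r := fun h => hrS' (h ▸ hxvS)
  have hne_xv_s : xv ≠ s := fun h => hsS' (h ▸ hxvS)
  have hne_xw_r : xw ≠ r := fun h => hrS' (h ▸ hxwS)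
  have hne_xw_s : xw ≠ s := fun h => hsS' (h ▸ hxwS)
  have hrfull : ∀ m, G.Adj r m → m = u ∨ m = v ∨ m = w :=
    fun m => deg3_full (hdeg r) hur.symm hvr.symm hwr.symm huv huw hvw
  have hsfull : ∀ m, G.Adj s m → m = u ∨ m = v ∨ m = w :=
    fun m => deg3_full (hdeg s) hus.symm hvs.symm hws.symm huv huw hvw
  have hufull : ∀ m, G.Adj u m → m = xu ∨ m = r ∨ m = s :=
    fun m => deg3_full (hdeg u) haxu hur hus hne_xu_r hne_xu_s hrs
  have hvfull : ∀ m, G.Adj v m → m = xv ∨ m = r ∨ m = s :=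
    fun m => deg3_full (hdeg v) haxv hvr hvs hne_xv_r hne_xv_s hrs
  have hwfull : ∀ m, G.Adj w m → m = xw ∨ m = r ∨ m = s :=
    fun m => deg3_full (hdeg w) haxw hwr hws hne_xw_r hne_xw_s hrs
  have hnadj_u_v : ¬ G.Adj u v := fun h => by
    rcases hufull _ h with rfl|rfl|rfl
    exacts [absurd rfl hne_v_xu, absurd rfl hne_v_r, absurd rfl hne_v_s]
  have hnadj_u_w : ¬ G.Adj u w := fun h => by
    rcases hufull _ h with rfl|rfl|rfl
    exacts [absurd rfl hne_w_xu, absurd rfl hne_w_r, absurd rfl hne_w_s]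
  have hnadj_v_w : ¬ G.Adj v w := fun h => by
    rcases hvfull _ h with rfl|rfl|rfl
    exacts [absurd rfl hne_w_xv, absurd rfl hne_w_r, absurd rfl hne_w_s]
  have hnadj_u_xv : ¬ G.Adj u xv := fun h => by
    rcases hufull _ h with rfl|rfl|rfl
    exacts [absurd rfl hxuv.symm, absurd rfl hne_xv_r, absurd rfl hne_xv_s]
  have hnadj_u_xw : ¬ G.Adj u xw := fun h => by
    rcases hufull _ h with rfl|rfl|rfl
    exacts [absurd rfl hxuw.symm, absurd rfl hne_xw_r, absurd rfl hne_xw_s]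
  have hnadj_v_xu : ¬ G.Adj v xu := fun h => by
    rcases hvfull _ h with rfl|rfl|rfl
    exacts [absurd rfl hxuv, absurd rfl hne_xu_r, absurd rfl hne_xu_s]
  have hnadj_v_xw : ¬ G.Adj v xw := fun h => by
    rcases hvfull _ h with rfl|rfl|rfl
    exacts [absurd rfl hxvw.symm, absurd rfl hne_xw_r, absurd rfl hne_xw_s]
  have hnadj_w_xu : ¬ G.Adj w xu := fun h => by
    rcases hwfull _ h with rfl|rfl|rfl
    exacts [absurd rfl hxuw, absurd rfl hne_xu_r, absurd rfl hne_xu_s]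
  have hnadj_w_xv : ¬ G.Adj w xv := fun h => by
    rcases hwfull _ h with rfl|rfl|rfl
    exacts [absurd rfl hxvw, absurd rfl hne_xv_r, absurd rfl hne_xv_s]
  have hnadj_r_s : ¬ G.Adj r s := fun h => by
    rcases hrfull _ h with rfl|rfl|rfl
    exacts [absurd rfl hne_u_s.symm, absurd rfl hne_v_s.symm, absurd rfl hne_w_s.symm]
  have hnadj_r_xu : ¬ G.Adj r xu := fun h => by
    rcases hrfull _ h with rfl|rfl|rfl
    exacts [absurd rfl hne_u_xu.symm, absurd rfl hne_v_xu.symm, absurd rfl hne_w_xu.symm]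
  have hnadj_r_xv : ¬ G.Adj r xv := fun h => by
    rcases hrfull _ h with rfl|rfl|rfl
    exacts [absurd rfl hne_u_xv.symm, absurd rfl hne_v_xv.symm, absurd rfl hne_w_xv.symm]
  have hnadj_r_xw : ¬ G.Adj r xw := fun h => by
    rcases hrfull _ h with rfl|rfl|rfl
    exacts [absurd rfl hne_u_xw.symm, absurd rfl hne_v_xw.symm, absurd rfl hne_w_xw.symm]
  have hnadj_s_xu : ¬ G.Adj s xu := fun h => by
    rcases hsfull _ h with rfl|rfl|rfl
    exacts [absurd rfl hne_u_xu.symm, absurd rfl hne_v_xu.symm, absurd rfl hne_w_xu.symm]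
  have hnadj_s_xv : ¬ G.Adj s xv := fun h => by
    rcases hsfull _ h with rfl|rfl|rfl
    exacts [absurd rfl hne_u_xv.symm, absurd rfl hne_v_xv.symm, absurd rfl hne_w_xv.symm]
  have hnadj_s_xw : ¬ G.Adj s xw := fun h => by
    rcases hsfull _ h with rfl|rfl|rfl
    exacts [absurd rfl hne_u_xw.symm, absurd rfl hne_v_xw.symm, absurd rfl hne_w_xw.symm]
  have haxuxv : G.Adj xu xv := by
    have hcom : ∃ c, G.Adj u c ∧ G.Adj c xv := by
      by_contra hnc
      push_neg at hnc
      exact Pball hGP huS hxuS haxu hxvS hne_u_xv hnadj_u_xv (fun c hc => hnc c hc.1 hc.2)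
    obtain ⟨c, hc1, hc2⟩ := hcom
    rcases hufull _ hc1 with rfl|rfl|rfl
    · exact hc2
    · exact absurd (hrfull _ hc2) (by rintro (rfl|rfl|rfl) <;> simp_all)
    · exact absurd (hsfull _ hc2) (by rintro (rfl|rfl|rfl) <;> simp_all)
  have haxuxw : G.Adj xu xw := by
    have hcom : ∃ c, G.Adj u c ∧ G.Adj c xw := by
      by_contra hnc
      push_neg at hnc
      exact Pball hGP huS hxuS haxu hxwS hne_u_xw hnadj_u_xw (fun c hc => hnc c hc.1 hc.2)
    obtain ⟨c, hc1, hc2⟩ := hcom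
    rcases hufull _ hc1 with rfl|rfl|rfl
    · exact hc2
    · exact absurd (hrfull _ hc2) (by rintro (rfl|rfl|rfl) <;> simp_all)
    · exact absurd (hsfull _ hc2) (by rintro (rfl|rfl|rfl) <;> simp_all)
  have haxvxw : G.Adj xv xw := by
    have hcom : ∃ c, G.Adj v c ∧ G.Adj c xw := by
      by_contra hnc
      push_neg at hnc
      exact Pball hGP hvS hxvS haxv hxwS hne_v_xw hnadj_v_xw (fun c hc => hnc c hc.1 hc.2)
    obtain ⟨c, hc1, hc2⟩ := hcom
    rcases hvfull _ hc1 with rfl|rfl|rfl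
    · exact hc2
    · exact absurd (hrfull _ hc2) (by rintro (rfl|rfl|rfl) <;> simp_all)
    · exact absurd (hsfull _ hc2) (by rintro (rfl|rfl|rfl) <;> simp_all)
  have hxufull : ∀ m, G.Adj xu m → m = u ∨ m = xv ∨ m = xw :=
    fun m => deg3_full (hdeg xu) haxu.symm haxuxv haxuxw hne_u_xv hne_u_xw hxvw
  have hxvfull : ∀ m, G.Adj xv m → m = v ∨ m = xu ∨ m = xw :=
    fun m => deg3_full (hdeg xv) haxv.symm haxuxv.symm haxvxw hne_v_xu hne_v_xw hxuw
  have hxwfull : ∀ m, G.Adj xw m → m = w ∨ m = xu ∨ m = xv :=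
    fun m => deg3_full (hdeg xw) haxw.symm haxuxw.symm haxvxw.symm hne_w_xu hne_w_xv hxuv
  have hBonly : ∀ y, tV y ∈ S → oV y ∉ S → y = xu ∨ y = xv ∨ y = xw := by
    intro y hyt hyo
    by_contra hcon
    push_neg at hcon
    obtain ⟨hy1, hy2, hy3⟩ := hcon
    have hyu : y ≠ u := by rintro rfl; exact hyo huS
    have hnadjuy : ¬ G.Adj u y := by
      intro h
      rcases hufull _ h with rfl|rfl|rfl
      exacts [hy1 rfl, hrS' hyt, hsS' hyt]
    have hcom : ∃ c, G.Adj u c ∧ G.Adj c y := by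
      by_contra hnc
      push_neg at hnc
      exact Pball hGP huS hxuS haxu hyt (Ne.symm hyu) hnadjuy (fun c hc => hnc c hc.1 hc.2)
    obtain ⟨c, hc1, hc2⟩ := hcom
    rcases hufull _ hc1 with rfl|rfl|rfl
    · rcases hxufull _ hc2 with rfl|rfl|rfl
      exacts [hyu rfl, hy2 rfl, hy3 rfl]
    · rcases hrfull _ hc2 with rfl|rfl|rfl
      exacts [hyo huS, hyo hvS, hyo hwS]
    · rcases hsfull _ hc2 with rfl|rfl|rfl
      exacts [hyo huS, hyo hvS, hyo hwS]
  have hAonly : ∀ a, oV a ∈ S → tV a ∉ S → False := by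
    intro a hao hat
    have hau : a ≠ u := by rintro rfl; exact hat huS'
    have hav : a ≠ v := by rintro rfl; exact hat hvS'
    have haw : a ≠ w := by rintro rfl; exact hat hwS'
    have hnadjua : ¬ G.Adj u a := by
      intro h
      rcases hufull _ h with rfl|rfl|rfl
      exacts [hat hxuS, hrS hao, hsS hao]
    have hnc : ∀ c, ¬ (G.Adj u c ∧ G.Adj c a) := by
      rintro c ⟨h1, h2⟩
      rcases hufull _ h1 with rfl|rfl|rfl
      · rcases hxufull _ h2 with rfl|rfl|rfl
        exacts [hau rfl, hat hxvS, hat hxwS]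
      · rcases hrfull _ h2 with rfl|rfl|rfl
        exacts [hau rfl, hav rfl, haw rfl]
      · rcases hsfull _ h2 with rfl|rfl|rfl
        exacts [hau rfl, hav rfl, haw rfl]
    have hnp : ∀ c d, ¬ (G.Adj u c ∧ G.Adj c d ∧ G.Adj d a) := by
      rintro c d ⟨h1, h2, h3⟩
      rcases hufull _ h1 with rfl|rfl|rfl
      · rcases hxufull _ h2 with rfl|rfl|rfl
        · exact hnadjua h3
        · rcases hxvfull _ h3 with rfl|rfl|rfl
          exacts [hav rfl, hat hxuS, hat hxwS]
        · rcases hxwfull _ h3 with rfl|rfl|rfl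
          exacts [haw rfl, hat hxuS, hat hxvS]
      · rcases hrfull _ h2 with rfl|rfl|rfl
        · exact hnadjua h3
        · rcases hvfull _ h3 with rfl|rfl|rfl
          exacts [hat hxvS, hrS hao, hsS hao]
        · rcases hwfull _ h3 with rfl|rfl|rfl
          exacts [hat hxwS, hrS hao, hsS hao]
      · rcases hsfull _ h2 with rfl|rfl|rfl
        · exact hnadjua h3
        · rcases hvfull _ h3 with rfl|rfl|rfl
          exacts [hat hxvS, hrS hao, hsS hao]
        · rcases hwfull _ h3 with rfl|rfl|rfl
          exacts [hat hxwS, hrS hao, hsS hao]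
    obtain ⟨ya, hya⟩ := exists_nbr (hdeg a)
    exact P6 hGP huS hao (Ne.symm hau) hnadjua (fun c hc => hnc c hc) hnp haxu hxuS hya
  have hsurj8 : ∀ y : V, y = u ∨ y = v ∨ y = w ∨ y = xu ∨ y = xv ∨ y = xw ∨ y = r ∨ y = s := by
    intro y
    by_cases h1 : oV y ∈ S <;> by_cases h2 : tV y ∈ S
    · rcases hC3 y h1 h2 with rfl|rfl|rfl <;> tauto
    · exact (hAonly y h1 h2).elim
    · rcases hBonly y h2 h1 with rfl|rfl|rfl <;> tauto
    · rcases hD2 y h1 h2 with rfl|rfl <;> tauto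
  have hcard8 : ({u, v, w, xu, xv, xw, r, s} : Finset V).card = 8 := by
    rw [Finset.card_insert_of_notMem (by simp [huv, huw, hne_u_xu, hne_u_xv, hne_u_xw, hne_u_r, hne_u_s, hvw, hne_v_xu, hne_v_xv, hne_v_xw, hne_v_r, hne_v_s, hne_w_xu, hne_w_xv, hne_w_xw, hne_w_r, hne_w_s, hxuv, hxuw, hne_xu_r, hne_xu_s, hxvw, hne_xv_r, hne_xv_s, hne_xw_r, hne_xw_s, hrs]),
        Finset.card_insert_of_notMem (by simp [huv, huw, hne_u_xu, hne_u_xv, hne_u_xw, hne_u_r, hne_u_s, hvw, hne_v_xu, hne_v_xv, hne_v_xw, hne_v_r, hne_v_s, hne_w_xu, hne_w_xv, hne_w_xw, hne_w_r, hne_w_s, hxuv, hxuw, hne_xu_r, hne_xu_s, hxvw, hne_xv_r, hne_xv_s, hne_xw_r, hne_xw_s, hrs]),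
        Finset.card_insert_of_notMem (by simp [huv, huw, hne_u_xu, hne_u_xv, hne_u_xw, hne_u_r, hne_u_s, hvw, hne_v_xu, hne_v_xv, hne_v_xw, hne_v_r, hne_v_s, hne_w_xu, hne_w_xv, hne_w_xw, hne_w_r, hne_w_s, hxuv, hxuw, hne_xu_r, hne_xu_s, hxvw, hne_xv_r, hne_xv_s, hne_xw_r, hne_xw_s, hrs]),
        Finset.card_insert_of_notMem (by simp [huv, huw, hne_u_xu, hne_u_xv, hne_u_xw, hne_u_r, hne_u_s, hvw, hne_v_xu, hne_v_xv, hne_v_xw, hne_v_r, hne_v_s, hne_w_xu, hne_w_xv, hne_w_xw, hne_w_r, hne_w_s, hxuv, hxuw, hne_xu_r, hne_xu_s, hxvw, hne_xv_r, hne_xv_s, hne_xw_r, hne_xw_s, hrs]),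
        Finset.card_insert_of_notMem (by simp [huv, huw, hne_u_xu, hne_u_xv, hne_u_xw, hne_u_r, hne_u_s, hvw, hne_v_xu, hne_v_xv, hne_v_xw, hne_v_r, hne_v_s, hne_w_xu, hne_w_xv, hne_w_xw, hne_w_r, hne_w_s, hxuv, hxuw, hne_xu_r, hne_xu_s, hxvw, hne_xv_r, hne_xv_s, hne_xw_r, hne_xw_s, hrs]),
        Finset.card_insert_of_notMem (by simp [huv, huw, hne_u_xu, hne_u_xv, hne_u_xw, hne_u_r, hne_u_s, hvw, hne_v_xu, hne_v_xv, hne_v_xw, hne_v_r, hne_v_s, hne_w_xu, hne_w_xv, hne_w_xw, hne_w_r, hne_w_s, hxuv, hxuw, hne_xu_r, hne_xu_s, hxvw, hne_xv_r, hne_xv_s, hne_xw_r, hne_xw_s, hrs]),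
        Finset.card_insert_of_notMem (by simp [huv, huw, hne_u_xu, hne_u_xv, hne_u_xw, hne_u_r, hne_u_s, hvw, hne_v_xu, hne_v_xv, hne_v_xw, hne_v_r, hne_v_s, hne_w_xu, hne_w_xv, hne_w_xw, hne_w_r, hne_w_s, hxuv, hxuw, hne_xu_r, hne_xu_s, hxvw, hne_xv_r, hne_xv_s, hne_xw_r, hne_xw_s, hrs]), Finset.card_singleton]
  let f : Fin 3 ⊕ (Fin 3 ⊕ Fin 2) → V := fun x =>
    match x with
    | Sum.inl i => if i = 0 then u else if i = 1 then v else w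
    | Sum.inr (Sum.inl i) => if i = 0 then xu else if i = 1 then xv else xw
    | Sum.inr (Sum.inr j) => if j = 0 then r else s
  have hfsurj : Function.Surjective f := by
    intro y
    rcases hsurj8 y with rfl|rfl|rfl|rfl|rfl|rfl|rfl|rfl
    · exact ⟨Sum.inl 0, rfl⟩
    · exact ⟨Sum.inl 1, rfl⟩
    · exact ⟨Sum.inl 2, rfl⟩
    · exact ⟨Sum.inr (Sum.inl 0), rfl⟩
    · exact ⟨Sum.inr (Sum.inl 1), rfl⟩
    · exact ⟨Sum.inr (Sum.inl 2), rfl⟩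
    · exact ⟨Sum.inr (Sum.inr 0), rfl⟩
    · exact ⟨Sum.inr (Sum.inr 1), rfl⟩
  have hcardle : Fintype.card V ≤ 8 := by
    have := Fintype.card_le_of_surjective f hfsurj
    simpa using this
  have hcardge : 8 ≤ Fintype.card V := by
    calc 8 = ({u, v, w, xu, xv, xw, r, s} : Finset V).card := hcard8.symm
    _ ≤ Fintype.card V := Finset.card_le_univ _
  have hbij : Function.Bijective f := by
    rw [Fintype.bijective_iff_surjective_and_card]
    exact ⟨hfsurj, by simp; omega⟩
  have htbl : ∀ a b, G.Adj (f a) (f b) ↔ (Gd 3).Adj a b := by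
    intro a b
    rcases a with ia | ia | ia <;> rcases b with ib | ib | ib <;> fin_cases ia <;> fin_cases ib
    · exact iff_of_false (G.irrefl) (by decide)
    · exact iff_of_false hnadj_u_v (by decide)
    · exact iff_of_false hnadj_u_w (by decide)
    · exact iff_of_false (fun h => hnadj_u_v h.symm) (by decide)
    · exact iff_of_false (G.irrefl) (by decide)
    · exact iff_of_false hnadj_v_w (by decide)
    · exact iff_of_false (fun h => hnadj_u_w h.symm) (by decide)
    · exact iff_of_false (fun h => hnadj_v_w h.symm) (by decide)
    · exact iff_of_false (G.irrefl) (by decide)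
    · exact iff_of_true haxu (by decide)
    · exact iff_of_false hnadj_u_xv (by decide)
    · exact iff_of_false hnadj_u_xw (by decide)
    · exact iff_of_false hnadj_v_xu (by decide)
    · exact iff_of_true haxv (by decide)
    · exact iff_of_false hnadj_v_xw (by decide)
    · exact iff_of_false hnadj_w_xu (by decide)
    · exact iff_of_false hnadj_w_xv (by decide)
    · exact iff_of_true haxw (by decide)
    · exact iff_of_true hur (by decide)
    · exact iff_of_true hus (by decide)
    · exact iff_of_true hvr (by decide)
    · exact iff_of_true hvs (by decide)
    · exact iff_of_true hwr (by decide)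
    · exact iff_of_true hws (by decide)
    · exact iff_of_true haxu.symm (by decide)
    · exact iff_of_false (fun h => hnadj_v_xu h.symm) (by decide)
    · exact iff_of_false (fun h => hnadj_w_xu h.symm) (by decide)
    · exact iff_of_false (fun h => hnadj_u_xv h.symm) (by decide)
    · exact iff_of_true haxv.symm (by decide)
    · exact iff_of_false (fun h => hnadj_w_xv h.symm) (by decide)
    · exact iff_of_false (fun h => hnadj_u_xw h.symm) (by decide)
    · exact iff_of_false (fun h => hnadj_v_xw h.symm) (by decide)
    · exact iff_of_true haxw.symm (by decide)
    · exact iff_of_false (G.irrefl) (by decide)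
    · exact iff_of_true haxuxv (by decide)
    · exact iff_of_true haxuxw (by decide)
    · exact iff_of_true haxuxv.symm (by decide)
    · exact iff_of_false (G.irrefl) (by decide)
    · exact iff_of_true haxvxw (by decide)
    · exact iff_of_true haxuxw.symm (by decide)
    · exact iff_of_true haxvxw.symm (by decide)
    · exact iff_of_false (G.irrefl) (by decide)
    · exact iff_of_false (fun h => hnadj_r_xu h.symm) (by decide)
    · exact iff_of_false (fun h => hnadj_s_xu h.symm) (by decide)
    · exact iff_of_false (fun h => hnadj_r_xv h.symm) (by decide)
    · exact iff_of_false (fun h => hnadj_s_xv h.symm) (by decide)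
    · exact iff_of_false (fun h => hnadj_r_xw h.symm) (by decide)
    · exact iff_of_false (fun h => hnadj_s_xw h.symm) (by decide)
    · exact iff_of_true hur.symm (by decide)
    · exact iff_of_true hvr.symm (by decide)
    · exact iff_of_true hwr.symm (by decide)
    · exact iff_of_true hus.symm (by decide)
    · exact iff_of_true hvs.symm (by decide)
    · exact iff_of_true hws.symm (by decide)
    · exact iff_of_false hnadj_r_xu (by decide)
    · exact iff_of_false hnadj_r_xv (by decide)
    · exact iff_of_false hnadj_r_xw (by decide)
    · exact iff_of_false hnadj_s_xu (by decide)
    · exact iff_of_false hnadj_s_xv (by decide)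
    · exact iff_of_false hnadj_s_xw (by decide)
    · exact iff_of_false (G.irrefl) (by decide)
    · exact iff_of_false hnadj_r_s (by decide)
    · exact iff_of_false (fun h => hnadj_r_s h.symm) (by decide)
    · exact iff_of_false (G.irrefl) (by decide)
  exact ⟨(SimpleGraph.Iso.symm ⟨Equiv.ofBijective f hbij, fun {a b} => htbl a b⟩)⟩

end MycHelp

namespace MycHelp

variable {G : SimpleGraph V}

set_option maxHeartbeats 1000000 in
lemma forward [Fintype V] [DecidableEq V] [DecidableRel G.Adj]
    (hnetop : G ≠ ⊤) (hdeg : ∀ z : V, (G.neighborFinset z).card = 3)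
    {S : Set (Option (V ⊕ V))}
    (hGP : IsGPSet (Mycielskian G) S)
    (hcard : Fintype.card V + 1 ≤ S.ncard) :
    Nonempty (G ≃g Gd 3) := by
  classical
  set n := Fintype.card V with hn
  set A : Finset V := Finset.univ.filter (fun a => oV a ∈ S) with hA
  set B : Finset V := Finset.univ.filter (fun a => tV a ∈ S) with hB
  have memA : ∀ a : V, a ∈ A ↔ oV a ∈ S := by intro a; simp [hA]
  have memB : ∀ a : V, a ∈ B ↔ tV a ∈ S := by intro a; simp [hB]
  have hkey : ∀ T : Finset (Option (V ⊕ V)), S ⊆ ↑T → S.ncard ≤ T.card := by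
    intro T h
    have := Set.ncard_le_ncard h T.finite_toSet
    simpa [Set.ncard_coe_finset] using this
  -- the root is not in S
  have hstar : none ∉ S := by
    intro hroot
    -- B has at most one element
    have hB1 : B.card ≤ 1 := by
      refine Finset.card_le_one.mpr (fun x hx y hy => ?_)
      by_contra hxy
      exact C1a hGP ((memB x).mp hx) ((memB y).mp hy) hxy hroot
    -- S is covered
    have hcover : S.ncard ≤ A.card + B.card + 1 := by
      have hsub : S ⊆ ↑(A.image oV ∪ B.image tV ∪ {(none : Option (V ⊕ V))}) := by
        intro z hz
        match z with
        | none => simp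
        | some (Sum.inl a) =>
          simp only [Finset.coe_union, Set.mem_union, Finset.coe_image]
          exact Or.inl (Or.inl ⟨a, (memA a).mpr hz, rfl⟩)
        | some (Sum.inr a) =>
          simp only [Finset.coe_union, Set.mem_union, Finset.coe_image]
          exact Or.inl (Or.inr ⟨a, (memB a).mpr hz, rfl⟩)
      calc S.ncard ≤ _ := hkey _ hsub
      _ ≤ (A.image oV ∪ B.image tV).card + 1 :=
          le_trans (Finset.card_union_le _ _) (by simp)
      _ ≤ A.card + B.card + 1 := by
          have := Finset.card_union_le (A.image oV) (B.image tV)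
          have h1 := Finset.card_image_le (f := oV) (s := A)
          have h2 := Finset.card_image_le (f := tV) (s := B)
          omega
    rcases Nat.le_one_iff_eq_zero_or_eq_one.mp hB1 with hB0 | hB1'
    · -- B empty : A = univ
      have hAcard : n ≤ A.card := by omega
      have hAuniv : ∀ a : V, oV a ∈ S := by
        intro a
        have : A = Finset.univ := Finset.eq_univ_of_card _ (le_antisymm (Finset.card_le_univ _) hAcard)
        exact (memA a).mp (this ▸ Finset.mem_univ a)
      obtain ⟨x, y, hxy, hnadj⟩ : ∃ x y : V, x ≠ y ∧ ¬ G.Adj x y := by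
        by_contra h
        push_neg at h
        apply hnetop
        ext x y
        simp only [SimpleGraph.top_adj]
        exact ⟨fun ha => ha.ne, fun hne' => h x y hne'⟩
      by_cases hc : ∃ c, G.Adj x c ∧ G.Adj c y
      · obtain ⟨c, hc1, hc2⟩ := hc
        exact (P3 hGP (hAuniv x) (hAuniv y) hxy hnadj hc1 hc2).1 (hAuniv c)
      · push_neg at hc
        by_cases hp : ∃ c d, G.Adj x c ∧ G.Adj c d ∧ G.Adj d y
        · obtain ⟨c, d, h1, h2, h3⟩ := hp
          exact (P7 hGP (hAuniv x) (hAuniv y) hxy hnadj (fun c hcc => hc c hcc.1 hcc.2)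
            h1 h2 h3).1 (hAuniv c)
        · push_neg at hp
          obtain ⟨wx, hwx⟩ := exists_nbr (hdeg x)
          obtain ⟨wy, hwy⟩ := exists_nbr (hdeg y)
          exact C1c hGP (hAuniv x) (hAuniv y) hroot hxy hnadj
            (fun c hcc => hc c hcc.1 hcc.2) (fun c d hcd => hp c d hcd.1 hcd.2.1 hcd.2.2)
            hwx hwy
    · -- B a singleton {x0}
      obtain ⟨x0, hx0⟩ := Finset.card_eq_one.mp hB1'
      have hx0S : tV x0 ∈ S := (memB x0).mp (hx0 ▸ Finset.mem_singleton_self x0)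
      have hdisj : Disjoint A (G.neighborFinset x0) := by
        rw [Finset.disjoint_right]
        intro a ha haA
        have hadj : G.Adj x0 a := (SimpleGraph.mem_neighborFinset _ _ _).mp ha
        exact C1b hGP ((memA a).mp haA) hroot hadj.symm hx0S
      have hcardle : A.card + 3 ≤ n := by
        have h1 := Finset.card_union_of_disjoint hdisj
        have h2 := Finset.card_le_univ (A ∪ G.neighborFinset x0)
        have h3 := hdeg x0
        omega
      omega
  -- covering without the root
  have hAB : n + 1 ≤ A.card + B.card := by
    have hsub : S ⊆ ↑(A.image oV ∪ B.image tV) := by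
      intro z hz
      match z with
      | none => exact absurd hz hstar
      | some (Sum.inl a) =>
        simp only [Finset.coe_union, Set.mem_union, Finset.coe_image]
        exact Or.inl ⟨a, (memA a).mpr hz, rfl⟩
      | some (Sum.inr a) =>
        simp only [Finset.coe_union, Set.mem_union, Finset.coe_image]
        exact Or.inr ⟨a, (memB a).mpr hz, rfl⟩
    have := hkey _ hsub
    have h1 := Finset.card_union_le (A.image oV) (B.image tV)
    have h2 := Finset.card_image_le (f := oV) (s := A)
    have h3 := Finset.card_image_le (f := tV) (s := B)
    omega
  -- define C and D
  set C : Finset V := A ∩ B with hC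
  set D : Finset V := (A ∪ B)ᶜ with hD
  have memC : ∀ a : V, a ∈ C ↔ (oV a ∈ S ∧ tV a ∈ S) := by
    intro a; simp [hC, Finset.mem_inter, memA, memB]
  have memD : ∀ a : V, a ∈ D ↔ (oV a ∉ S ∧ tV a ∉ S) := by
    intro a
    simp only [hD, Finset.mem_compl, Finset.mem_union, not_or]
    rw [memA, memB]
  have hCD : D.card + 1 ≤ C.card := by
    have h1 := Finset.card_union_add_card_inter A B
    have h2 := Finset.card_add_card_compl (A ∪ B)
    rw [← hC] at h1
    rw [← hD] at h2
    omega
  have hCA : C ⊆ A := Finset.inter_subset_left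
  have hCB : C ⊆ B := Finset.inter_subset_right
  -- structural fact: neighbors of C-vertices are not in A
  have hCind : ∀ z ∈ C, ∀ m, G.Adj z m → m ∉ A := by
    intro z hz m hadj hmA
    exact P1 hGP ((memC z).mp hz).1 ((memC z).mp hz).2 hadj ((memA m).mp hmA)
  have hCnadj : ∀ z1 ∈ C, ∀ z2 ∈ C, ¬ G.Adj z1 z2 := by
    intro z1 h1 z2 h2 hadj
    exact hCind z1 h1 z2 hadj (hCA h2)
  -- common neighbors of two C-vertices are in D
  have hP3C : ∀ z1 ∈ C, ∀ z2 ∈ C, z1 ≠ z2 → ∀ m, G.Adj z1 m → G.Adj z2 m →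
      (oV m ∉ S ∧ tV m ∉ S) := by
    intro z1 h1 z2 h2 hne12 m hm1 hm2
    exact P3 hGP ((memC z1).mp h1).1 ((memC z2).mp h2).1 hne12 (hCnadj z1 h1 z2 h2)
      hm1 hm2.symm
  -- neighbourhood size facts
  have hNB1 : ∀ z ∈ C, (G.neighborFinset z ∩ B).card ≤ 1 := by
    intro z hz
    refine Finset.card_le_one.mpr ?_
    intro p hp q hq
    by_contra hpq
    simp only [Finset.mem_inter, SimpleGraph.mem_neighborFinset] at hp hq
    exact P2 hGP ((memB _).mp hp.2) ((memB _).mp hq.2) hpq hp.1 hq.1 ((memA z).mp (hCA hz))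
  have hNsplit : ∀ z ∈ C, (G.neighborFinset z ∩ B).card + (G.neighborFinset z ∩ D).card = 3 := by
    intro z hz
    have hdisj : Disjoint (G.neighborFinset z ∩ B) (G.neighborFinset z ∩ D) := by
      rw [Finset.disjoint_left]
      intro m hm1 hm2
      simp only [Finset.mem_inter] at hm1 hm2
      exact ((memD m).mp hm2.2).2 ((memB m).mp hm1.2)
    have hcup : (G.neighborFinset z ∩ B) ∪ (G.neighborFinset z ∩ D) = G.neighborFinset z := by
      ext m
      simp only [Finset.mem_union, Finset.mem_inter, SimpleGraph.mem_neighborFinset]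
      constructor
      · rintro (⟨h, _⟩ | ⟨h, _⟩) <;> exact h
      · intro h
        by_cases hmB : m ∈ B
        · exact Or.inl ⟨h, hmB⟩
        · refine Or.inr ⟨h, (memD m).mpr ⟨fun hc => hCind z hz m h ((memA m).mpr hc),
            fun hc => hmB ((memB m).mpr hc)⟩⟩
    have hcu := Finset.card_union_of_disjoint hdisj
    rw [hcup, hdeg z] at hcu
    omega
  -- C1 and C0
  set C1 : Finset V := C.filter (fun z => (G.neighborFinset z ∩ B).Nonempty) with hC1def
  set C0 : Finset V := C.filter (fun z => ¬ (G.neighborFinset z ∩ B).Nonempty) with hC0def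
  have hC1C : C1 ⊆ C := Finset.filter_subset _ _
  have hC0C : C0 ⊆ C := Finset.filter_subset _ _
  have hC01 : C1.card + C0.card = C.card := Finset.card_filter_add_card_filter_not _
  have hcard2 : ∀ z ∈ C1, (G.neighborFinset z ∩ D).card = 2 := by
    intro z hz
    obtain ⟨hzC, hne⟩ := Finset.mem_filter.mp hz
    have h1 := hNB1 z hzC
    have h2 := hNsplit z hzC
    have h3 : 1 ≤ (G.neighborFinset z ∩ B).card := Finset.card_pos.mpr hne
    omega
  have hcard3 : ∀ z ∈ C0, (G.neighborFinset z ∩ D).card = 3 := by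
    intro z hz
    obtain ⟨hzC, hne⟩ := Finset.mem_filter.mp hz
    have h2 := hNsplit z hzC
    have h3 : (G.neighborFinset z ∩ B).card = 0 := by
      rw [Finset.card_eq_zero]
      exact Finset.not_nonempty_iff_eq_empty.mp hne
    omega
  -- double counting
  have hinterfilter : ∀ (z : V) (T : Finset V),
      G.neighborFinset z ∩ T = T.filter (fun m => G.Adj z m) := by
    intro z T
    ext m
    simp [SimpleGraph.mem_neighborFinset, and_comm]
  have hdc : ∑ z ∈ C, (G.neighborFinset z ∩ D).card
      = ∑ x ∈ D, (G.neighborFinset x ∩ C).card := by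
    calc ∑ z ∈ C, (G.neighborFinset z ∩ D).card
        = ∑ z ∈ C, ∑ x ∈ D, if G.Adj z x then 1 else 0 := by
          refine Finset.sum_congr rfl (fun z _ => ?_)
          rw [hinterfilter, Finset.card_filter]
      _ = ∑ x ∈ D, ∑ z ∈ C, if G.Adj z x then 1 else 0 := Finset.sum_comm
      _ = ∑ x ∈ D, (G.neighborFinset x ∩ C).card := by
          refine Finset.sum_congr rfl (fun x _ => ?_)
          rw [hinterfilter, Finset.card_filter]
          refine Finset.sum_congr rfl (fun z _ => ?_)
          simp [SimpleGraph.adj_comm]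
  have hsum1 : ∑ z ∈ C, (G.neighborFinset z ∩ D).card = 2 * C1.card + 3 * C0.card := by
    have e1 : ∑ z ∈ C1, (G.neighborFinset z ∩ D).card = 2 * C1.card := by
      rw [Finset.sum_congr rfl hcard2, Finset.sum_const, smul_eq_mul, mul_comm]
    have e2 : ∑ z ∈ C0, (G.neighborFinset z ∩ D).card = 3 * C0.card := by
      rw [Finset.sum_congr rfl hcard3, Finset.sum_const, smul_eq_mul, mul_comm]
    have e3 : ∑ z ∈ C, (G.neighborFinset z ∩ D).card
        = ∑ z ∈ C1, (G.neighborFinset z ∩ D).card + ∑ z ∈ C0, (G.neighborFinset z ∩ D).card := by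
      rw [hC1def, hC0def]
      exact (Finset.sum_filter_add_sum_filter_not C _ _).symm
    rw [e3, e1, e2]
  have hsum2 : ∑ x ∈ D, (G.neighborFinset x ∩ C).card ≤ 3 * D.card := by
    calc ∑ x ∈ D, (G.neighborFinset x ∩ C).card
        ≤ ∑ x ∈ D, 3 := by
          refine Finset.sum_le_sum (fun x _ => ?_)
          calc (G.neighborFinset x ∩ C).card ≤ (G.neighborFinset x).card :=
                Finset.card_le_card Finset.inter_subset_left
          _ = 3 := hdeg x
      _ = 3 * D.card := by rw [Finset.sum_const, smul_eq_mul, mul_comm]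
  have hC13 : 3 ≤ C1.card := by omega
  -- choose three distinct elements of C1
  obtain ⟨T3, hT3sub, hT3card⟩ := Finset.exists_subset_card_eq hC13
  obtain ⟨u, v, w, huv, huw, hvw, hT3⟩ := Finset.card_eq_three.mp hT3card
  have huC1 : u ∈ C1 := hT3sub (by rw [hT3]; simp)
  have hvC1 : v ∈ C1 := hT3sub (by rw [hT3]; simp)
  have hwC1 : w ∈ C1 := hT3sub (by rw [hT3]; simp)
  have huC : u ∈ C := hC1C huC1
  have hvC : v ∈ C := hC1C hvC1
  have hwC : w ∈ C := hC1C hwC1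
  -- B-neighbors of C1 vertices
  have hC1dat : ∀ z ∈ C1, ∃ x, tV x ∈ S ∧ G.Adj z x ∧ oV x ∉ S := by
    intro z hz
    obtain ⟨hzC, hne⟩ := Finset.mem_filter.mp hz
    obtain ⟨x, hx⟩ := hne
    simp only [Finset.mem_inter, SimpleGraph.mem_neighborFinset] at hx
    exact ⟨x, (memB x).mp hx.2, hx.1, fun hc => hCind z hzC x hx.1 ((memA x).mpr hc)⟩
  obtain ⟨xu, hxuS, haxu, hxuA⟩ := hC1dat u huC1
  obtain ⟨xv, hxvS, haxv, hxvA⟩ := hC1dat v hvC1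
  obtain ⟨xw, hxwS, haxw, hxwA⟩ := hC1dat w hwC1
  -- common neighbours in D
  have hcom : ∀ z1 ∈ C1, ∀ z2 ∈ C, z1 ≠ z2 → ∃ c, G.Adj z1 c ∧ G.Adj z2 c ∧ c ∈ D := by
    intro z1 h1 z2 h2 hne12
    obtain ⟨x, hxS, hax, _⟩ := hC1dat z1 h1
    have hz1C := hC1C h1
    have hnadj := hCnadj z1 hz1C z2 h2
    have hex : ∃ c, G.Adj z1 c ∧ G.Adj c z2 := by
      by_contra hno
      push_neg at hno
      exact Pball hGP ((memC z1).mp hz1C).1 hxS hax ((memC z2).mp h2).2 hne12 hnadj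
        (fun c hc => hno c hc.1 hc.2)
    obtain ⟨c, hc1, hc2⟩ := hex
    have hcd := hP3C z1 hz1C z2 h2 hne12 c hc1 hc2.symm
    exact ⟨c, hc1, hc2.symm, (memD c).mpr hcd⟩
  -- naming S-membership facts
  have huSo : oV u ∈ S := ((memC u).mp huC).1
  have huSt : tV u ∈ S := ((memC u).mp huC).2
  have hvSo : oV v ∈ S := ((memC v).mp hvC).1
  have hvSt : tV v ∈ S := ((memC v).mp hvC).2
  have hwSo : oV w ∈ S := ((memC w).mp hwC).1
  have hwSt : tV w ∈ S := ((memC w).mp hwC).2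
  have hxuxv : xu ≠ xv := by
    rintro rfl
    exact (hP3C u huC v hvC huv xu haxu haxv).2 hxuS
  have hxuxw : xu ≠ xw := by
    rintro rfl
    exact (hP3C u huC w hwC huw xu haxu haxw).2 hxuS
  have hxvxw : xv ≠ xw := by
    rintro rfl
    exact (hP3C v hvC w hwC hvw xv haxv haxw).2 hxvS
  -- characterisation of the two D-neighbours of a C1-vertex
  have hDchar2 : ∀ z ∈ C1, ∀ p q : V, p ≠ q → G.Adj z p → p ∈ D → G.Adj z q → q ∈ D →
      ∀ m, G.Adj z m → m ∈ D → m = p ∨ m = q := by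
    intro z hz p q hpq h1 h2 h3 h4 m hm1 hm2
    have hc2 := hcard2 z hz
    have hsub : ({p, q} : Finset V) ⊆ G.neighborFinset z ∩ D := by
      intro a ha
      simp only [Finset.mem_insert, Finset.mem_singleton] at ha
      rcases ha with rfl | rfl <;>
        simp [Finset.mem_inter, SimpleGraph.mem_neighborFinset, h1, h2, h3, h4]
    have heq := Finset.eq_of_subset_of_card_le hsub (by rw [hc2, Finset.card_pair hpq])
    have hmm : m ∈ ({p, q} : Finset V) := by
      rw [heq]
      simp [Finset.mem_inter, SimpleGraph.mem_neighborFinset, hm1, hm2]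
    simpa using hmm
  have hsecondD : ∀ z ∈ C1, ∀ rr, G.Adj z rr → rr ∈ D →
      ∃ qq, qq ≠ rr ∧ G.Adj z qq ∧ qq ∈ D := by
    intro z hz rr h1 h2
    have hc2 := hcard2 z hz
    have hrm : rr ∈ G.neighborFinset z ∩ D := by
      simp [Finset.mem_inter, SimpleGraph.mem_neighborFinset, h1, h2]
    have hpos : 0 < ((G.neighborFinset z ∩ D).erase rr).card := by
      rw [Finset.card_erase_of_mem hrm, hc2]
      norm_num
    obtain ⟨qq, hqq⟩ := Finset.card_pos.mp hpos
    obtain ⟨h3, h4⟩ := Finset.mem_erase.mp hqq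
    simp only [Finset.mem_inter, SimpleGraph.mem_neighborFinset] at h4
    exact ⟨qq, h3, h4.1, h4.2⟩
  have hthird : ∀ t pp qq : V, pp ≠ qq → G.Adj t pp → G.Adj t qq →
      ∃ yt, G.Adj t yt ∧ yt ≠ pp ∧ yt ≠ qq ∧ (∀ m, G.Adj t m → m = pp ∨ m = qq ∨ m = yt) := by
    intro t pp qq hne1 h1 h2
    have h3 := hdeg t
    have hppm : pp ∈ G.neighborFinset t := by simp [SimpleGraph.mem_neighborFinset, h1]
    have hqqm : qq ∈ (G.neighborFinset t).erase pp := by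
      simp [Finset.mem_erase, SimpleGraph.mem_neighborFinset, h2, Ne.symm hne1]
    have hcard1 : (((G.neighborFinset t).erase pp).erase qq).card = 1 := by
      rw [Finset.card_erase_of_mem hqqm, Finset.card_erase_of_mem hppm, h3]
    obtain ⟨yt, hyt⟩ := Finset.card_eq_one.mp hcard1
    have hytm : yt ∈ ((G.neighborFinset t).erase pp).erase qq := by rw [hyt]; simp
    simp only [Finset.mem_erase, SimpleGraph.mem_neighborFinset] at hytm
    obtain ⟨hytqq, hytpp, hytadj⟩ := hytm
    exact ⟨yt, hytadj, hytpp, hytqq,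
      fun m hm => deg3_full h3 h1 h2 hytadj hne1 (Ne.symm hytpp) (Ne.symm hytqq) hm⟩
  have hcard_uvw : ({u, v, w} : Finset V).card = 3 := by
    rw [Finset.card_insert_of_notMem (by simp [huv, huw]),
        Finset.card_insert_of_notMem (by simp [hvw]), Finset.card_singleton]
  have htex : 4 ≤ C.card → ∃ t, t ∈ C ∧ t ≠ u ∧ t ≠ v ∧ t ≠ w := by
    intro h4
    have hle := Finset.le_card_sdiff ({u, v, w} : Finset V) C
    rw [hcard_uvw] at hle
    have h1 : 0 < (C \ ({u, v, w} : Finset V)).card := by omega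
    obtain ⟨t, ht⟩ := Finset.card_pos.mp h1
    rw [Finset.mem_sdiff] at ht
    obtain ⟨htC, htn⟩ := ht
    simp only [Finset.mem_insert, Finset.mem_singleton, not_or] at htn
    exact ⟨t, htC, htn.1, htn.2.1, htn.2.2⟩
  by_cases hcore : ∃ rr, rr ∈ D ∧ G.Adj u rr ∧ G.Adj v rr ∧ G.Adj w rr
  · -- CORE case
    obtain ⟨r, hrD, hur, hvr, hwr⟩ := hcore
    have hrfull : ∀ m, G.Adj r m → m = u ∨ m = v ∨ m = w :=
      fun m => deg3_full (hdeg r) hur.symm hvr.symm hwr.symm huv huw hvw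
    obtain ⟨qu, hqur, huqu, hquD⟩ := hsecondD u huC1 r hur hrD
    obtain ⟨qv, hqvr, hvqv, hqvD⟩ := hsecondD v hvC1 r hvr hrD
    obtain ⟨qw, hqwr, hwqw, hqwD⟩ := hsecondD w hwC1 r hwr hrD
    have hDuchar : ∀ m, G.Adj u m → m ∈ D → m = r ∨ m = qu :=
      hDchar2 u huC1 r qu (Ne.symm hqur) hur hrD huqu hquD
    have hDvchar : ∀ m, G.Adj v m → m ∈ D → m = r ∨ m = qv :=
      hDchar2 v hvC1 r qv (Ne.symm hqvr) hvr hrD hvqv hqvD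
    have hDwchar : ∀ m, G.Adj w m → m ∈ D → m = r ∨ m = qw :=
      hDchar2 w hwC1 r qw (Ne.symm hqwr) hwr hrD hwqw hqwD
    have hT : ∀ t ∈ C, t ≠ u → t ≠ v → t ≠ w → G.Adj t qu ∧ G.Adj t qv ∧ G.Adj t qw := by
      intro t ht htu htv htw
      refine ⟨?_, ?_, ?_⟩
      · obtain ⟨c, hc1, hc2, hcD⟩ := hcom u huC1 t ht (Ne.symm htu)
        rcases hDuchar c hc1 hcD with rfl | rfl
        · rcases hrfull t hc2.symm with rfl | rfl | rfl
          exacts [absurd rfl htu, absurd rfl htv, absurd rfl htw]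
        · exact hc2
      · obtain ⟨c, hc1, hc2, hcD⟩ := hcom v hvC1 t ht (Ne.symm htv)
        rcases hDvchar c hc1 hcD with rfl | rfl
        · rcases hrfull t hc2.symm with rfl | rfl | rfl
          exacts [absurd rfl htu, absurd rfl htv, absurd rfl htw]
        · exact hc2
      · obtain ⟨c, hc1, hc2, hcD⟩ := hcom w hwC1 t ht (Ne.symm htw)
        rcases hDwchar c hc1 hcD with rfl | rfl
        · rcases hrfull t hc2.symm with rfl | rfl | rfl
          exacts [absurd rfl htu, absurd rfl htv, absurd rfl htw]
        · exact hc2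
    by_cases h12 : qu = qv
    · by_cases h13 : qu = qw
      · -- all three equal : endgame
        subst h12
        subst h13
        have hqufull : ∀ m, G.Adj qu m → m = u ∨ m = v ∨ m = w :=
          fun m => deg3_full (hdeg qu) huqu.symm hvqv.symm hwqw.symm huv huw hvw
        have hC3 : ∀ z, oV z ∈ S → tV z ∈ S → z = u ∨ z = v ∨ z = w := by
          intro z h1 h2
          by_contra hcon
          push_neg at hcon
          obtain ⟨n1, n2, n3⟩ := hcon
          have hzC : z ∈ C := (memC z).mpr ⟨h1, h2⟩
          obtain ⟨ha1, _, _⟩ := hT z hzC n1 n2 n3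
          rcases hqufull z ha1.symm with rfl | rfl | rfl
          exacts [n1 rfl, n2 rfl, n3 rfl]
        have hCsub : C ⊆ ({u, v, w} : Finset V) := by
          intro z hz
          have := hC3 z ((memC z).mp hz).1 ((memC z).mp hz).2
          simpa using this
        have hDle : D.card ≤ 2 := by
          have := Finset.card_le_card hCsub
          rw [hcard_uvw] at this
          omega
        have hsubD : ({r, qu} : Finset V) ⊆ D := by
          intro a ha
          simp only [Finset.mem_insert, Finset.mem_singleton] at ha
          rcases ha with rfl | rfl
          exacts [hrD, hquD]
        have hDeq : ({r, qu} : Finset V) = D :=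
          Finset.eq_of_subset_of_card_le hsubD (by rw [Finset.card_pair (Ne.symm hqur)]; omega)
        have hD2 : ∀ d', oV d' ∉ S → tV d' ∉ S → d' = r ∨ d' = qu := by
          intro d' h1 h2
          have : d' ∈ ({r, qu} : Finset V) := by rw [hDeq]; exact (memD d').mpr ⟨h1, h2⟩
          simpa using this
        have hrso := (memD r).mp hrD
        have hqso := (memD qu).mp hquD
        exact endgame hGP hdeg huSo huSt hvSo hvSt hwSo hwSt huv huw hvw
          hxuS hxuA hxvS hxvA hxwS hxwA hxuxv hxuxw hxvxw
          hrso.1 hrso.2 hqso.1 hqso.2 (Ne.symm hqur)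
          haxu haxv haxw hur huqu hvr hvqv hwr hwqw hC3 hD2
      · -- qu = qv =: s0, qw distinct
        have hbs0 : G.Adj v qu := by rw [h12]; exact hvqv
        have hs0qc : qu ≠ qw := h13
        have hsub3 : ({r, qu, qw} : Finset V) ⊆ D := by
          intro a' ha'
          simp only [Finset.mem_insert, Finset.mem_singleton] at ha'
          rcases ha' with rfl | rfl | rfl
          exacts [hrD, hquD, hqwD]
        have hcard3D : ({r, qu, qw} : Finset V).card = 3 := by
          rw [Finset.card_insert_of_notMem (by simp [Ne.symm hqur, Ne.symm hqwr]),
              Finset.card_insert_of_notMem (by simp [hs0qc]), Finset.card_singleton]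
        have hCge4 : 4 ≤ C.card := by
          have hcc := Finset.card_le_card hsub3
          rw [hcard3D] at hcc
          omega
        obtain ⟨t, htC, htu, htv, htw⟩ := htex hCge4
        have htSo : oV t ∈ S := ((memC t).mp htC).1
        obtain ⟨hT1, hT2, hT3⟩ := hT t htC htu htv htw
        have hts0 : G.Adj t qu := hT1
        have htqc : G.Adj t qw := hT3
        have hs0full : ∀ m, G.Adj qu m → m = u ∨ m = v ∨ m = t :=
          fun m => deg3_full (hdeg qu) huqu.symm hbs0.symm hts0.symm huv (Ne.symm htu) (Ne.symm htv)
        have hCsub4 : ∀ z ∈ C, z = u ∨ z = v ∨ z = w ∨ z = t := by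
          intro z hz
          by_contra hcon
          push_neg at hcon
          obtain ⟨n1, n2, n3, n4⟩ := hcon
          obtain ⟨k1, k2, k3⟩ := hT z hz n1 n2 n3
          rcases hs0full z k1.symm with rfl | rfl | rfl
          exacts [n1 rfl, n2 rfl, n4 rfl]
        have hCle4 : C.card ≤ 4 := by
          have hsub : C ⊆ insert t ({u, v, w} : Finset V) := by
            intro z hz
            rcases hCsub4 z hz with rfl | rfl | rfl | rfl <;> simp
          have hc1 := Finset.card_le_card hsub
          have hc2 := Finset.card_insert_le t ({u, v, w} : Finset V)
          omega
        have hDeq : ({r, qu, qw} : Finset V) = D :=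
          Finset.eq_of_subset_of_card_le hsub3 (by rw [hcard3D]; omega)
        obtain ⟨yt, hadjyt, hyts0, hytqc, hNt⟩ := hthird t qu qw hs0qc hts0 htqc
        have hytA : oV yt ∉ S := fun hc => hCind t htC yt hadjyt ((memA yt).mpr hc)
        have hytB : tV yt ∈ S := by
          by_contra hytB
          have hytD : yt ∈ ({r, qu, qw} : Finset V) := by
            rw [hDeq]; exact (memD yt).mpr ⟨hytA, hytB⟩
          simp only [Finset.mem_insert, Finset.mem_singleton] at hytD
          rcases hytD with rfl | rfl | rfl
          · rcases hrfull t hadjyt.symm with rfl | rfl | rfl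
            exacts [htu rfl, htv rfl, htw rfl]
          · exact hyts0 rfl
          · exact hytqc rfl
        -- overflow at u with p := r, q := qu, b-list [xv, xw, yt]
        have hb1 : tV xv ∈ S ∧ xv ≠ u ∧ ¬G.Adj u xv ∧ ¬G.Adj r xv ∧ ¬G.Adj qu xv := by
          refine ⟨hxvS, by rintro rfl; exact hxvA huSo, ?_, ?_, ?_⟩
          · intro h
            exact (hP3C u huC v hvC huv xv h haxv).2 hxvS
          · intro h
            rcases hrfull xv h with rfl | rfl | rfl
            exacts [hxvA huSo, hxvA hvSo, hxvA hwSo]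
          · intro h
            rcases hs0full xv h with rfl | rfl | rfl
            exacts [hxvA huSo, hxvA hvSo, hxvA htSo]
        have hb2 : tV xw ∈ S ∧ xw ≠ u ∧ ¬G.Adj u xw ∧ ¬G.Adj r xw ∧ ¬G.Adj qu xw := by
          refine ⟨hxwS, by rintro rfl; exact hxwA huSo, ?_, ?_, ?_⟩
          · intro h
            exact (hP3C u huC w hwC huw xw h haxw).2 hxwS
          · intro h
            rcases hrfull xw h with rfl | rfl | rfl
            exacts [hxwA huSo, hxwA hvSo, hxwA hwSo]
          · intro h
            rcases hs0full xw h with rfl | rfl | rfl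
            exacts [hxwA huSo, hxwA hvSo, hxwA htSo]
        have hb3 : tV yt ∈ S ∧ yt ≠ u ∧ ¬G.Adj u yt ∧ ¬G.Adj r yt ∧ ¬G.Adj qu yt := by
          refine ⟨hytB, by rintro rfl; exact hytA huSo, ?_, ?_, ?_⟩
          · intro h
            exact (hP3C u huC t htC (Ne.symm htu) yt h hadjyt).2 hytB
          · intro h
            rcases hrfull yt h with rfl | rfl | rfl
            exacts [hytA huSo, hytA hvSo, hytA hwSo]
          · intro h
            rcases hs0full yt h with rfl | rfl | rfl
            exacts [hytA huSo, hytA hvSo, hytA htSo]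
        have hd12 : xv ≠ xw := hxvxw
        have hd13 : xv ≠ yt := by
          rintro rfl
          exact (hP3C v hvC t htC (Ne.symm htv) xv haxv hadjyt).2 hxvS
        have hd23 : xw ≠ yt := by
          rintro rfl
          exact (hP3C w hwC t htC (Ne.symm htw) xw haxw hadjyt).2 hxwS
        have hxp : xu ≠ r := by rintro rfl; exact ((memD _).mp hrD).2 hxuS
        have hxq : xu ≠ qu := by rintro rfl; exact ((memD _).mp hquD).2 hxuS
        exact (overflow hGP hdeg huSo hxuS haxu hur huqu hxp hxq (Ne.symm hqur)
          (by
            intro m hm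
            simp only [List.mem_cons, List.not_mem_nil, or_false, List.mem_singleton] at hm
            rcases hm with rfl | rfl | rfl
            exacts [hb1, hb2, hb3]) hd12 hd13 hd23).elim
    · by_cases h13 : qu = qw
      · -- qu = qw =: s0, qv distinct
        have hbs0 : G.Adj w qu := by rw [h13]; exact hwqw
        have hs0qc : qu ≠ qv := h12
        have hsub3 : ({r, qu, qv} : Finset V) ⊆ D := by
          intro a' ha'
          simp only [Finset.mem_insert, Finset.mem_singleton] at ha'
          rcases ha' with rfl | rfl | rfl
          exacts [hrD, hquD, hqvD]
        have hcard3D : ({r, qu, qv} : Finset V).card = 3 := by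
          rw [Finset.card_insert_of_notMem (by simp [Ne.symm hqur, Ne.symm hqvr]),
              Finset.card_insert_of_notMem (by simp [hs0qc]), Finset.card_singleton]
        have hCge4 : 4 ≤ C.card := by
          have hcc := Finset.card_le_card hsub3
          rw [hcard3D] at hcc
          omega
        obtain ⟨t, htC, htu, htv, htw⟩ := htex hCge4
        have htSo : oV t ∈ S := ((memC t).mp htC).1
        obtain ⟨hT1, hT2, hT3⟩ := hT t htC htu htv htw
        have hts0 : G.Adj t qu := hT1
        have htqc : G.Adj t qv := hT2
        have hs0full : ∀ m, G.Adj qu m → m = u ∨ m = w ∨ m = t :=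
          fun m => deg3_full (hdeg qu) huqu.symm hbs0.symm hts0.symm huw (Ne.symm htu) (Ne.symm htw)
        have hCsub4 : ∀ z ∈ C, z = u ∨ z = v ∨ z = w ∨ z = t := by
          intro z hz
          by_contra hcon
          push_neg at hcon
          obtain ⟨n1, n2, n3, n4⟩ := hcon
          obtain ⟨k1, k2, k3⟩ := hT z hz n1 n2 n3
          rcases hs0full z k1.symm with rfl | rfl | rfl
          exacts [n1 rfl, n3 rfl, n4 rfl]
        have hCle4 : C.card ≤ 4 := by
          have hsub : C ⊆ insert t ({u, v, w} : Finset V) := by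
            intro z hz
            rcases hCsub4 z hz with rfl | rfl | rfl | rfl <;> simp
          have hc1 := Finset.card_le_card hsub
          have hc2 := Finset.card_insert_le t ({u, v, w} : Finset V)
          omega
        have hDeq : ({r, qu, qv} : Finset V) = D :=
          Finset.eq_of_subset_of_card_le hsub3 (by rw [hcard3D]; omega)
        obtain ⟨yt, hadjyt, hyts0, hytqc, hNt⟩ := hthird t qu qv hs0qc hts0 htqc
        have hytA : oV yt ∉ S := fun hc => hCind t htC yt hadjyt ((memA yt).mpr hc)
        have hytB : tV yt ∈ S := by
          by_contra hytB
          have hytD : yt ∈ ({r, qu, qv} : Finset V) := by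
            rw [hDeq]; exact (memD yt).mpr ⟨hytA, hytB⟩
          simp only [Finset.mem_insert, Finset.mem_singleton] at hytD
          rcases hytD with rfl | rfl | rfl
          · rcases hrfull t hadjyt.symm with rfl | rfl | rfl
            exacts [htu rfl, htv rfl, htw rfl]
          · exact hyts0 rfl
          · exact hytqc rfl
        -- overflow at u with p := r, q := qu, b-list [xw, xv, yt]
        have hb1 : tV xw ∈ S ∧ xw ≠ u ∧ ¬G.Adj u xw ∧ ¬G.Adj r xw ∧ ¬G.Adj qu xw := by
          refine ⟨hxwS, by rintro rfl; exact hxwA huSo, ?_, ?_, ?_⟩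
          · intro h
            exact (hP3C u huC w hwC huw xw h haxw).2 hxwS
          · intro h
            rcases hrfull xw h with rfl | rfl | rfl
            exacts [hxwA huSo, hxwA hvSo, hxwA hwSo]
          · intro h
            rcases hs0full xw h with rfl | rfl | rfl
            exacts [hxwA huSo, hxwA hwSo, hxwA htSo]
        have hb2 : tV xv ∈ S ∧ xv ≠ u ∧ ¬G.Adj u xv ∧ ¬G.Adj r xv ∧ ¬G.Adj qu xv := by
          refine ⟨hxvS, by rintro rfl; exact hxvA huSo, ?_, ?_, ?_⟩
          · intro h
            exact (hP3C u huC v hvC huv xv h haxv).2 hxvS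
          · intro h
            rcases hrfull xv h with rfl | rfl | rfl
            exacts [hxvA huSo, hxvA hvSo, hxvA hwSo]
          · intro h
            rcases hs0full xv h with rfl | rfl | rfl
            exacts [hxvA huSo, hxvA hwSo, hxvA htSo]
        have hb3 : tV yt ∈ S ∧ yt ≠ u ∧ ¬G.Adj u yt ∧ ¬G.Adj r yt ∧ ¬G.Adj qu yt := by
          refine ⟨hytB, by rintro rfl; exact hytA huSo, ?_, ?_, ?_⟩
          · intro h
            exact (hP3C u huC t htC (Ne.symm htu) yt h hadjyt).2 hytB
          · intro h
            rcases hrfull yt h with rfl | rfl | rfl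
            exacts [hytA huSo, hytA hvSo, hytA hwSo]
          · intro h
            rcases hs0full yt h with rfl | rfl | rfl
            exacts [hytA huSo, hytA hwSo, hytA htSo]
        have hd12 : xw ≠ xv := hxvxw.symm
        have hd13 : xw ≠ yt := by
          rintro rfl
          exact (hP3C w hwC t htC (Ne.symm htw) xw haxw hadjyt).2 hxwS
        have hd23 : xv ≠ yt := by
          rintro rfl
          exact (hP3C v hvC t htC (Ne.symm htv) xv haxv hadjyt).2 hxvS
        have hxp : xu ≠ r := by rintro rfl; exact ((memD _).mp hrD).2 hxuS
        have hxq : xu ≠ qu := by rintro rfl; exact ((memD _).mp hquD).2 hxuS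
        exact (overflow hGP hdeg huSo hxuS haxu hur huqu hxp hxq (Ne.symm hqur)
          (by
            intro m hm
            simp only [List.mem_cons, List.not_mem_nil, or_false, List.mem_singleton] at hm
            rcases hm with rfl | rfl | rfl
            exacts [hb1, hb2, hb3]) hd12 hd13 hd23).elim
      · by_cases h23 : qv = qw
        · -- qv = qw =: s0, qu distinct
          have hbs0 : G.Adj w qv := by rw [h23]; exact hwqw
          have hs0qc : qv ≠ qu := fun h => h12 h.symm
          have hsub3 : ({r, qv, qu} : Finset V) ⊆ D := by
            intro a' ha'
            simp only [Finset.mem_insert, Finset.mem_singleton] at ha'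
            rcases ha' with rfl | rfl | rfl
            exacts [hrD, hqvD, hquD]
          have hcard3D : ({r, qv, qu} : Finset V).card = 3 := by
            rw [Finset.card_insert_of_notMem (by simp [Ne.symm hqvr, Ne.symm hqur]),
                Finset.card_insert_of_notMem (by simp [hs0qc]), Finset.card_singleton]
          have hCge4 : 4 ≤ C.card := by
            have hcc := Finset.card_le_card hsub3
            rw [hcard3D] at hcc
            omega
          obtain ⟨t, htC, htu, htv, htw⟩ := htex hCge4
          have htSo : oV t ∈ S := ((memC t).mp htC).1
          obtain ⟨hT1, hT2, hT3⟩ := hT t htC htu htv htw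
          have hts0 : G.Adj t qv := hT2
          have htqc : G.Adj t qu := hT1
          have hs0full : ∀ m, G.Adj qv m → m = v ∨ m = w ∨ m = t :=
            fun m => deg3_full (hdeg qv) hvqv.symm hbs0.symm hts0.symm hvw (Ne.symm htv) (Ne.symm htw)
          have hCsub4 : ∀ z ∈ C, z = u ∨ z = v ∨ z = w ∨ z = t := by
            intro z hz
            by_contra hcon
            push_neg at hcon
            obtain ⟨n1, n2, n3, n4⟩ := hcon
            obtain ⟨k1, k2, k3⟩ := hT z hz n1 n2 n3
            rcases hs0full z k2.symm with rfl | rfl | rfl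
            exacts [n2 rfl, n3 rfl, n4 rfl]
          have hCle4 : C.card ≤ 4 := by
            have hsub : C ⊆ insert t ({u, v, w} : Finset V) := by
              intro z hz
              rcases hCsub4 z hz with rfl | rfl | rfl | rfl <;> simp
            have hc1 := Finset.card_le_card hsub
            have hc2 := Finset.card_insert_le t ({u, v, w} : Finset V)
            omega
          have hDeq : ({r, qv, qu} : Finset V) = D :=
            Finset.eq_of_subset_of_card_le hsub3 (by rw [hcard3D]; omega)
          obtain ⟨yt, hadjyt, hyts0, hytqc, hNt⟩ := hthird t qv qu hs0qc hts0 htqc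
          have hytA : oV yt ∉ S := fun hc => hCind t htC yt hadjyt ((memA yt).mpr hc)
          have hytB : tV yt ∈ S := by
            by_contra hytB
            have hytD : yt ∈ ({r, qv, qu} : Finset V) := by
              rw [hDeq]; exact (memD yt).mpr ⟨hytA, hytB⟩
            simp only [Finset.mem_insert, Finset.mem_singleton] at hytD
            rcases hytD with rfl | rfl | rfl
            · rcases hrfull t hadjyt.symm with rfl | rfl | rfl
              exacts [htu rfl, htv rfl, htw rfl]
            · exact hyts0 rfl
            · exact hytqc rfl
          -- overflow at v with p := r, q := qv, b-list [xw, xu, yt]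
          have hb1 : tV xw ∈ S ∧ xw ≠ v ∧ ¬G.Adj v xw ∧ ¬G.Adj r xw ∧ ¬G.Adj qv xw := by
            refine ⟨hxwS, by rintro rfl; exact hxwA hvSo, ?_, ?_, ?_⟩
            · intro h
              exact (hP3C v hvC w hwC hvw xw h haxw).2 hxwS
            · intro h
              rcases hrfull xw h with rfl | rfl | rfl
              exacts [hxwA huSo, hxwA hvSo, hxwA hwSo]
            · intro h
              rcases hs0full xw h with rfl | rfl | rfl
              exacts [hxwA hvSo, hxwA hwSo, hxwA htSo]
          have hb2 : tV xu ∈ S ∧ xu ≠ v ∧ ¬G.Adj v xu ∧ ¬G.Adj r xu ∧ ¬G.Adj qv xu := by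
            refine ⟨hxuS, by rintro rfl; exact hxuA hvSo, ?_, ?_, ?_⟩
            · intro h
              exact (hP3C v hvC u huC huv.symm xu h haxu).2 hxuS
            · intro h
              rcases hrfull xu h with rfl | rfl | rfl
              exacts [hxuA huSo, hxuA hvSo, hxuA hwSo]
            · intro h
              rcases hs0full xu h with rfl | rfl | rfl
              exacts [hxuA hvSo, hxuA hwSo, hxuA htSo]
          have hb3 : tV yt ∈ S ∧ yt ≠ v ∧ ¬G.Adj v yt ∧ ¬G.Adj r yt ∧ ¬G.Adj qv yt := by
            refine ⟨hytB, by rintro rfl; exact hytA hvSo, ?_, ?_, ?_⟩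
            · intro h
              exact (hP3C v hvC t htC (Ne.symm htv) yt h hadjyt).2 hytB
            · intro h
              rcases hrfull yt h with rfl | rfl | rfl
              exacts [hytA huSo, hytA hvSo, hytA hwSo]
            · intro h
              rcases hs0full yt h with rfl | rfl | rfl
              exacts [hytA hvSo, hytA hwSo, hytA htSo]
          have hd12 : xw ≠ xu := hxuxw.symm
          have hd13 : xw ≠ yt := by
            rintro rfl
            exact (hP3C w hwC t htC (Ne.symm htw) xw haxw hadjyt).2 hxwS
          have hd23 : xu ≠ yt := by
            rintro rfl
            exact (hP3C u huC t htC (Ne.symm htu) xu haxu hadjyt).2 hxuS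
          have hxp : xv ≠ r := by rintro rfl; exact ((memD _).mp hrD).2 hxvS
          have hxq : xv ≠ qv := by rintro rfl; exact ((memD _).mp hqvD).2 hxvS
          exact (overflow hGP hdeg hvSo hxvS haxv hvr hvqv hxp hxq (Ne.symm hqvr)
            (by
              intro m hm
              simp only [List.mem_cons, List.not_mem_nil, or_false, List.mem_singleton] at hm
              rcases hm with rfl | rfl | rfl
              exacts [hb1, hb2, hb3]) hd12 hd13 hd23).elim
        · -- all distinct
          have hsub4 : ({r, qu, qv, qw} : Finset V) ⊆ D := by
            intro a' ha'
            simp only [Finset.mem_insert, Finset.mem_singleton] at ha'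
            rcases ha' with rfl | rfl | rfl | rfl
            exacts [hrD, hquD, hqvD, hqwD]
          have hcard4 : ({r, qu, qv, qw} : Finset V).card = 4 := by
            rw [Finset.card_insert_of_notMem (by simp [Ne.symm hqur, Ne.symm hqvr, Ne.symm hqwr]),
                Finset.card_insert_of_notMem (by simp [h12, h13]),
                Finset.card_insert_of_notMem (by simp [h23]), Finset.card_singleton]
          have hCge5 : 5 ≤ C.card := by
            have hcc := Finset.card_le_card hsub4
            rw [hcard4] at hcc
            omega
          have h2lt : 1 < (C \ ({u, v, w} : Finset V)).card := by
            have hle := Finset.le_card_sdiff ({u, v, w} : Finset V) C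
            rw [hcard_uvw] at hle
            omega
          obtain ⟨t1, ht1, t2, ht2, ht12⟩ := Finset.one_lt_card.mp h2lt
          rw [Finset.mem_sdiff] at ht1 ht2
          obtain ⟨ht1C, ht1n⟩ := ht1
          obtain ⟨ht2C, ht2n⟩ := ht2
          simp only [Finset.mem_insert, Finset.mem_singleton, not_or] at ht1n ht2n
          obtain ⟨ht1u, ht1v, ht1w⟩ := ht1n
          obtain ⟨ht2u, ht2v, ht2w⟩ := ht2n
          obtain ⟨k11, k12, k13⟩ := hT t1 ht1C ht1u ht1v ht1w
          obtain ⟨k21, k22, k23⟩ := hT t2 ht2C ht2u ht2v ht2w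
          have ht1So : oV t1 ∈ S := ((memC t1).mp ht1C).1
          have ht2So : oV t2 ∈ S := ((memC t2).mp ht2C).1
          have hqufull : ∀ m, G.Adj qu m → m = u ∨ m = t1 ∨ m = t2 :=
            fun m => deg3_full (hdeg qu) huqu.symm k11.symm k21.symm (Ne.symm ht1u) (Ne.symm ht2u) ht12
          have hqvfull : ∀ m, G.Adj qv m → m = v ∨ m = t1 ∨ m = t2 :=
            fun m => deg3_full (hdeg qv) hvqv.symm k12.symm k22.symm (Ne.symm ht1v) (Ne.symm ht2v) ht12
          have hqwfull : ∀ m, G.Adj qw m → m = w ∨ m = t1 ∨ m = t2 :=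
            fun m => deg3_full (hdeg qw) hwqw.symm k13.symm k23.symm (Ne.symm ht1w) (Ne.symm ht2w) ht12
          have ht1full : ∀ m, G.Adj t1 m → m = qu ∨ m = qv ∨ m = qw :=
            fun m => deg3_full (hdeg t1) k11 k12 k13 h12 h13 h23
          have hnadjt1xu : ¬ G.Adj t1 xu := fun h => (hP3C t1 ht1C u huC ht1u xu h haxu).2 hxuS
          have hnc : ∀ c, ¬ (G.Adj t1 c ∧ G.Adj c xu) := by
            rintro c ⟨h1, h2⟩
            rcases ht1full c h1 with rfl | rfl | rfl
            · rcases hqufull xu h2 with rfl | rfl | rfl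
              exacts [hxuA huSo, hxuA ht1So, hxuA ht2So]
            · rcases hqvfull xu h2 with rfl | rfl | rfl
              exacts [hxuA hvSo, hxuA ht1So, hxuA ht2So]
            · rcases hqwfull xu h2 with rfl | rfl | rfl
              exacts [hxuA hwSo, hxuA ht1So, hxuA ht2So]
          exact (P5c hGP ht1So hxuS hnadjt1xu hnc k11 huqu.symm haxu huSo).elim
    

  · -- TRIANGLE case
    push_neg at hcore
    obtain ⟨q, hq1, hq2, hqD⟩ := hcom u huC1 v hvC huv
    obtain ⟨p, hp1, hp2, hpD⟩ := hcom u huC1 w hwC huw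
    obtain ⟨r0, hr1, hr2, hr0D⟩ := hcom v hvC1 w hwC hvw
    have hqp : q ≠ p := by rintro rfl; exact hcore q hqD hq1 hq2 hp2
    have hqr0 : q ≠ r0 := by rintro rfl; exact hcore q hqD hq1 hq2 hr2
    have hpr0 : p ≠ r0 := by rintro rfl; exact hcore p hpD hp1 hr1 hp2
    have hDU : ∀ m, G.Adj u m → m ∈ D → m = q ∨ m = p :=
      hDchar2 u huC1 q p hqp hq1 hqD hp1 hpD
    have hDV : ∀ m, G.Adj v m → m ∈ D → m = q ∨ m = r0 :=
      hDchar2 v hvC1 q r0 hqr0 hq2 hqD hr1 hr0D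
    have hDW : ∀ m, G.Adj w m → m ∈ D → m = p ∨ m = r0 :=
      hDchar2 w hwC1 p r0 hpr0 hp2 hpD hr2 hr0D
    have hT : ∀ t ∈ C, t ≠ u → t ≠ v → t ≠ w →
        (G.Adj t p ∧ G.Adj t q) ∨ (G.Adj t q ∧ G.Adj t r0) ∨ (G.Adj t p ∧ G.Adj t r0) := by
      intro t ht h1 h2 h3
      have c1 : G.Adj t q ∨ G.Adj t p := by
        obtain ⟨c, hc1, hc2, hcD⟩ := hcom u huC1 t ht (Ne.symm h1)
        rcases hDU c hc1 hcD with rfl | rfl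
        exacts [Or.inl hc2, Or.inr hc2]
      have c2 : G.Adj t q ∨ G.Adj t r0 := by
        obtain ⟨c, hc1, hc2, hcD⟩ := hcom v hvC1 t ht (Ne.symm h2)
        rcases hDV c hc1 hcD with rfl | rfl
        exacts [Or.inl hc2, Or.inr hc2]
      have c3 : G.Adj t p ∨ G.Adj t r0 := by
        obtain ⟨c, hc1, hc2, hcD⟩ := hcom w hwC1 t ht (Ne.symm h3)
        rcases hDW c hc1 hcD with rfl | rfl
        exacts [Or.inl hc2, Or.inr hc2]
      tauto
    have honet : ∀ t1 ∈ C, ∀ t2 ∈ C, t1 ≠ u → t1 ≠ v → t1 ≠ w →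
        t2 ≠ u → t2 ≠ v → t2 ≠ w → t1 ≠ t2 → False := by
      intro t1 ht1C t2 ht2C a1 a2 a3 b1 b2 b3 hne12
      rcases hT t1 ht1C a1 a2 a3 with ⟨hA1, hA2⟩ | ⟨hA1, hA2⟩ | ⟨hA1, hA2⟩ <;>
        rcases hT t2 ht2C b1 b2 b3 with ⟨hB1, hB2⟩ | ⟨hB1, hB2⟩ | ⟨hB1, hB2⟩
      · exact four_nbrs (hdeg p) hp1.symm hp2.symm hA1.symm hB1.symm huw (Ne.symm a1) (Ne.symm b1) (Ne.symm a3) (Ne.symm b3) hne12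
      · exact four_nbrs (hdeg q) hq1.symm hq2.symm hA2.symm hB1.symm huv (Ne.symm a1) (Ne.symm b1) (Ne.symm a2) (Ne.symm b2) hne12
      · exact four_nbrs (hdeg p) hp1.symm hp2.symm hA1.symm hB1.symm huw (Ne.symm a1) (Ne.symm b1) (Ne.symm a3) (Ne.symm b3) hne12
      · exact four_nbrs (hdeg q) hq1.symm hq2.symm hA1.symm hB2.symm huv (Ne.symm a1) (Ne.symm b1) (Ne.symm a2) (Ne.symm b2) hne12
      · exact four_nbrs (hdeg q) hq1.symm hq2.symm hA1.symm hB1.symm huv (Ne.symm a1) (Ne.symm b1) (Ne.symm a2) (Ne.symm b2) hne12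
      · exact four_nbrs (hdeg r0) hr1.symm hr2.symm hA2.symm hB2.symm hvw (Ne.symm a2) (Ne.symm b2) (Ne.symm a3) (Ne.symm b3) hne12
      · exact four_nbrs (hdeg p) hp1.symm hp2.symm hA1.symm hB1.symm huw (Ne.symm a1) (Ne.symm b1) (Ne.symm a3) (Ne.symm b3) hne12
      · exact four_nbrs (hdeg r0) hr1.symm hr2.symm hA2.symm hB2.symm hvw (Ne.symm a2) (Ne.symm b2) (Ne.symm a3) (Ne.symm b3) hne12
      · exact four_nbrs (hdeg p) hp1.symm hp2.symm hA1.symm hB1.symm huw (Ne.symm a1) (Ne.symm b1) (Ne.symm a3) (Ne.symm b3) hne12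
    have hsub3 : ({q, p, r0} : Finset V) ⊆ D := by
      intro a' ha'
      simp only [Finset.mem_insert, Finset.mem_singleton] at ha'
      rcases ha' with rfl | rfl | rfl
      exacts [hqD, hpD, hr0D]
    have hcard3D : ({q, p, r0} : Finset V).card = 3 := by
      rw [Finset.card_insert_of_notMem (by simp [hqp, hqr0]),
          Finset.card_insert_of_notMem (by simp [hpr0]), Finset.card_singleton]
    have hCge4 : 4 ≤ C.card := by
      have hcc := Finset.card_le_card hsub3
      rw [hcard3D] at hcc
      omega
    obtain ⟨t, htC, htu, htv, htw⟩ := htex hCge4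
    have htSo : oV t ∈ S := ((memC t).mp htC).1
    have hCsub4 : ∀ z ∈ C, z = u ∨ z = v ∨ z = w ∨ z = t := by
      intro z hz
      by_contra hcon
      push_neg at hcon
      obtain ⟨n1, n2, n3, n4⟩ := hcon
      exact honet z hz t htC n1 n2 n3 htu htv htw n4
    have hCle4 : C.card ≤ 4 := by
      have hsub : C ⊆ insert t ({u, v, w} : Finset V) := by
        intro z hz
        rcases hCsub4 z hz with rfl | rfl | rfl | rfl <;> simp
      have hc1 := Finset.card_le_card hsub
      have hc2 := Finset.card_insert_le t ({u, v, w} : Finset V)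
      omega
    have hDeq : ({q, p, r0} : Finset V) = D :=
      Finset.eq_of_subset_of_card_le hsub3 (by rw [hcard3D]; omega)
    by_cases hall : G.Adj t p ∧ G.Adj t q ∧ G.Adj t r0
    · obtain ⟨e1, e2, e3⟩ := hall
      have hpfull : ∀ m, G.Adj p m → m = u ∨ m = w ∨ m = t :=
        fun m => deg3_full (hdeg p) hp1.symm hp2.symm e1.symm huw (Ne.symm htu) (Ne.symm htw)
      have hqfull : ∀ m, G.Adj q m → m = u ∨ m = v ∨ m = t :=
        fun m => deg3_full (hdeg q) hq1.symm hq2.symm e2.symm huv (Ne.symm htu) (Ne.symm htv)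
      have hr0full : ∀ m, G.Adj r0 m → m = v ∨ m = w ∨ m = t :=
        fun m => deg3_full (hdeg r0) hr1.symm hr2.symm e3.symm hvw (Ne.symm htv) (Ne.symm htw)
      have htfull : ∀ m, G.Adj t m → m = p ∨ m = q ∨ m = r0 :=
        fun m => deg3_full (hdeg t) e1 e2 e3 (Ne.symm hqp) hpr0 hqr0
      have hnadjtxu : ¬ G.Adj t xu := fun h => (hP3C t htC u huC htu xu h haxu).2 hxuS
      have hnc : ∀ c, ¬ (G.Adj t c ∧ G.Adj c xu) := by
        rintro c ⟨h1, h2⟩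
        rcases htfull c h1 with rfl | rfl | rfl
        · rcases hpfull xu h2 with rfl | rfl | rfl
          exacts [hxuA huSo, hxuA hwSo, hxuA htSo]
        · rcases hqfull xu h2 with rfl | rfl | rfl
          exacts [hxuA huSo, hxuA hvSo, hxuA htSo]
        · rcases hr0full xu h2 with rfl | rfl | rfl
          exacts [hxuA hvSo, hxuA hwSo, hxuA htSo]
      exact (P5c hGP htSo hxuS hnadjtxu hnc e1 hp1.symm haxu huSo).elim
    · rcases hT t htC htu htv htw with ⟨e1, e2⟩ | ⟨e1, e2⟩ | ⟨e1, e2⟩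
      · -- t adjacent to p and q, not r0 : overflow at u
        have hmiss : ¬ G.Adj t r0 := fun h => hall ⟨e1, e2, h⟩
        have hZ1full : ∀ m, G.Adj p m → m = u ∨ m = w ∨ m = t :=
          fun m => deg3_full (hdeg p) hp1.symm hp2.symm e1.symm huw (Ne.symm htu) (Ne.symm htw)
        have hZ2full : ∀ m, G.Adj q m → m = u ∨ m = v ∨ m = t :=
          fun m => deg3_full (hdeg q) hq1.symm hq2.symm e2.symm huv (Ne.symm htu) (Ne.symm htv)
        obtain ⟨yt, hadjyt, hytZ1, hytZ2, hNt⟩ := hthird t p q (Ne.symm hqp) e1 e2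
        have hytA : oV yt ∉ S := fun hc => hCind t htC yt hadjyt ((memA yt).mpr hc)
        have hytB : tV yt ∈ S := by
          by_contra hytB
          have hytD : yt ∈ ({q, p, r0} : Finset V) := by
            rw [hDeq]; exact (memD yt).mpr ⟨hytA, hytB⟩
          simp only [Finset.mem_insert, Finset.mem_singleton] at hytD
          rcases hytD with rfl | rfl | rfl <;>
            first
              | exact hytZ1 rfl
              | exact hytZ2 rfl
              | exact hmiss hadjyt
        have hb1 : tV xw ∈ S ∧ xw ≠ u ∧ ¬G.Adj u xw ∧ ¬G.Adj p xw ∧ ¬G.Adj q xw := by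
          refine ⟨hxwS, by rintro rfl; exact hxwA huSo, ?_, ?_, ?_⟩
          · intro h
            exact (hP3C u huC w hwC huw xw h haxw).2 hxwS
          · intro h
            rcases hZ1full xw h with rfl | rfl | rfl
            exacts [hxwA huSo, hxwA hwSo, hxwA htSo]
          · intro h
            rcases hZ2full xw h with rfl | rfl | rfl
            exacts [hxwA huSo, hxwA hvSo, hxwA htSo]
        have hb2 : tV xv ∈ S ∧ xv ≠ u ∧ ¬G.Adj u xv ∧ ¬G.Adj p xv ∧ ¬G.Adj q xv := by
          refine ⟨hxvS, by rintro rfl; exact hxvA huSo, ?_, ?_, ?_⟩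
          · intro h
            exact (hP3C u huC v hvC huv xv h haxv).2 hxvS
          · intro h
            rcases hZ1full xv h with rfl | rfl | rfl
            exacts [hxvA huSo, hxvA hwSo, hxvA htSo]
          · intro h
            rcases hZ2full xv h with rfl | rfl | rfl
            exacts [hxvA huSo, hxvA hvSo, hxvA htSo]
        have hb3 : tV yt ∈ S ∧ yt ≠ u ∧ ¬G.Adj u yt ∧ ¬G.Adj p yt ∧ ¬G.Adj q yt := by
          refine ⟨hytB, by rintro rfl; exact hytA huSo, ?_, ?_, ?_⟩
          · intro h
            exact (hP3C u huC t htC (Ne.symm htu) yt h hadjyt).2 hytB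
          · intro h
            rcases hZ1full yt h with rfl | rfl | rfl
            exacts [hytA huSo, hytA hwSo, hytA htSo]
          · intro h
            rcases hZ2full yt h with rfl | rfl | rfl
            exacts [hytA huSo, hytA hvSo, hytA htSo]
        have hd12 : xw ≠ xv := hxvxw.symm
        have hd13 : xw ≠ yt := by
          rintro rfl
          exact (hP3C w hwC t htC (Ne.symm htw) xw haxw hadjyt).2 hxwS
        have hd23 : xv ≠ yt := by
          rintro rfl
          exact (hP3C v hvC t htC (Ne.symm htv) xv haxv hadjyt).2 hxvS
        have hxp : xu ≠ p := by rintro rfl; exact ((memD _).mp hpD).2 hxuS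
        have hxq : xu ≠ q := by rintro rfl; exact ((memD _).mp hqD).2 hxuS
        exact (overflow hGP hdeg huSo hxuS haxu hp1 hq1 hxp hxq (Ne.symm hqp)
          (by
            intro m hm
            simp only [List.mem_cons, List.not_mem_nil, or_false, List.mem_singleton] at hm
            rcases hm with rfl | rfl | rfl
            exacts [hb1, hb2, hb3]) hd12 hd13 hd23).elim
      · -- t adjacent to q and r0, not p : overflow at v
        have hmiss : ¬ G.Adj t p := fun h => hall ⟨h, e1, e2⟩
        have hZ1full : ∀ m, G.Adj q m → m = v ∨ m = u ∨ m = t :=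
          fun m => deg3_full (hdeg q) hq2.symm hq1.symm e1.symm huv.symm (Ne.symm htv) (Ne.symm htu)
        have hZ2full : ∀ m, G.Adj r0 m → m = v ∨ m = w ∨ m = t :=
          fun m => deg3_full (hdeg r0) hr1.symm hr2.symm e2.symm hvw (Ne.symm htv) (Ne.symm htw)
        obtain ⟨yt, hadjyt, hytZ1, hytZ2, hNt⟩ := hthird t q r0 hqr0 e1 e2
        have hytA : oV yt ∉ S := fun hc => hCind t htC yt hadjyt ((memA yt).mpr hc)
        have hytB : tV yt ∈ S := by
          by_contra hytB
          have hytD : yt ∈ ({q, p, r0} : Finset V) := by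
            rw [hDeq]; exact (memD yt).mpr ⟨hytA, hytB⟩
          simp only [Finset.mem_insert, Finset.mem_singleton] at hytD
          rcases hytD with rfl | rfl | rfl <;>
            first
              | exact hytZ1 rfl
              | exact hytZ2 rfl
              | exact hmiss hadjyt
        have hb1 : tV xu ∈ S ∧ xu ≠ v ∧ ¬G.Adj v xu ∧ ¬G.Adj q xu ∧ ¬G.Adj r0 xu := by
          refine ⟨hxuS, by rintro rfl; exact hxuA hvSo, ?_, ?_, ?_⟩
          · intro h
            exact (hP3C v hvC u huC huv.symm xu h haxu).2 hxuS
          · intro h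
            rcases hZ1full xu h with rfl | rfl | rfl
            exacts [hxuA hvSo, hxuA huSo, hxuA htSo]
          · intro h
            rcases hZ2full xu h with rfl | rfl | rfl
            exacts [hxuA hvSo, hxuA hwSo, hxuA htSo]
        have hb2 : tV xw ∈ S ∧ xw ≠ v ∧ ¬G.Adj v xw ∧ ¬G.Adj q xw ∧ ¬G.Adj r0 xw := by
          refine ⟨hxwS, by rintro rfl; exact hxwA hvSo, ?_, ?_, ?_⟩
          · intro h
            exact (hP3C v hvC w hwC hvw xw h haxw).2 hxwS
          · intro h
            rcases hZ1full xw h with rfl | rfl | rfl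
            exacts [hxwA hvSo, hxwA huSo, hxwA htSo]
          · intro h
            rcases hZ2full xw h with rfl | rfl | rfl
            exacts [hxwA hvSo, hxwA hwSo, hxwA htSo]
        have hb3 : tV yt ∈ S ∧ yt ≠ v ∧ ¬G.Adj v yt ∧ ¬G.Adj q yt ∧ ¬G.Adj r0 yt := by
          refine ⟨hytB, by rintro rfl; exact hytA hvSo, ?_, ?_, ?_⟩
          · intro h
            exact (hP3C v hvC t htC (Ne.symm htv) yt h hadjyt).2 hytB
          · intro h
            rcases hZ1full yt h with rfl | rfl | rfl
            exacts [hytA hvSo, hytA huSo, hytA htSo]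
          · intro h
            rcases hZ2full yt h with rfl | rfl | rfl
            exacts [hytA hvSo, hytA hwSo, hytA htSo]
        have hd12 : xu ≠ xw := hxuxw
        have hd13 : xu ≠ yt := by
          rintro rfl
          exact (hP3C u huC t htC (Ne.symm htu) xu haxu hadjyt).2 hxuS
        have hd23 : xw ≠ yt := by
          rintro rfl
          exact (hP3C w hwC t htC (Ne.symm htw) xw haxw hadjyt).2 hxwS
        have hxp : xv ≠ q := by rintro rfl; exact ((memD _).mp hqD).2 hxvS
        have hxq : xv ≠ r0 := by rintro rfl; exact ((memD _).mp hr0D).2 hxvS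
        exact (overflow hGP hdeg hvSo hxvS haxv hq2 hr1 hxp hxq hqr0
          (by
            intro m hm
            simp only [List.mem_cons, List.not_mem_nil, or_false, List.mem_singleton] at hm
            rcases hm with rfl | rfl | rfl
            exacts [hb1, hb2, hb3]) hd12 hd13 hd23).elim
      · -- t adjacent to p and r0, not q : overflow at w
        have hmiss : ¬ G.Adj t q := fun h => hall ⟨e1, h, e2⟩
        have hZ1full : ∀ m, G.Adj p m → m = w ∨ m = u ∨ m = t :=
          fun m => deg3_full (hdeg p) hp2.symm hp1.symm e1.symm huw.symm (Ne.symm htw) (Ne.symm htu)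
        have hZ2full : ∀ m, G.Adj r0 m → m = w ∨ m = v ∨ m = t :=
          fun m => deg3_full (hdeg r0) hr2.symm hr1.symm e2.symm hvw.symm (Ne.symm htw) (Ne.symm htv)
        obtain ⟨yt, hadjyt, hytZ1, hytZ2, hNt⟩ := hthird t p r0 hpr0 e1 e2
        have hytA : oV yt ∉ S := fun hc => hCind t htC yt hadjyt ((memA yt).mpr hc)
        have hytB : tV yt ∈ S := by
          by_contra hytB
          have hytD : yt ∈ ({q, p, r0} : Finset V) := by
            rw [hDeq]; exact (memD yt).mpr ⟨hytA, hytB⟩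
          simp only [Finset.mem_insert, Finset.mem_singleton] at hytD
          rcases hytD with rfl | rfl | rfl <;>
            first
              | exact hytZ1 rfl
              | exact hytZ2 rfl
              | exact hmiss hadjyt
        have hb1 : tV xu ∈ S ∧ xu ≠ w ∧ ¬G.Adj w xu ∧ ¬G.Adj p xu ∧ ¬G.Adj r0 xu := by
          refine ⟨hxuS, by rintro rfl; exact hxuA hwSo, ?_, ?_, ?_⟩
          · intro h
            exact (hP3C w hwC u huC huw.symm xu h haxu).2 hxuS
          · intro h
            rcases hZ1full xu h with rfl | rfl | rfl
            exacts [hxuA hwSo, hxuA huSo, hxuA htSo]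
          · intro h
            rcases hZ2full xu h with rfl | rfl | rfl
            exacts [hxuA hwSo, hxuA hvSo, hxuA htSo]
        have hb2 : tV xv ∈ S ∧ xv ≠ w ∧ ¬G.Adj w xv ∧ ¬G.Adj p xv ∧ ¬G.Adj r0 xv := by
          refine ⟨hxvS, by rintro rfl; exact hxvA hwSo, ?_, ?_, ?_⟩
          · intro h
            exact (hP3C w hwC v hvC hvw.symm xv h haxv).2 hxvS
          · intro h
            rcases hZ1full xv h with rfl | rfl | rfl
            exacts [hxvA hwSo, hxvA huSo, hxvA htSo]
          · intro h
            rcases hZ2full xv h with rfl | rfl | rfl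
            exacts [hxvA hwSo, hxvA hvSo, hxvA htSo]
        have hb3 : tV yt ∈ S ∧ yt ≠ w ∧ ¬G.Adj w yt ∧ ¬G.Adj p yt ∧ ¬G.Adj r0 yt := by
          refine ⟨hytB, by rintro rfl; exact hytA hwSo, ?_, ?_, ?_⟩
          · intro h
            exact (hP3C w hwC t htC (Ne.symm htw) yt h hadjyt).2 hytB
          · intro h
            rcases hZ1full yt h with rfl | rfl | rfl
            exacts [hytA hwSo, hytA huSo, hytA htSo]
          · intro h
            rcases hZ2full yt h with rfl | rfl | rfl
            exacts [hytA hwSo, hytA hvSo, hytA htSo]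
        have hd12 : xu ≠ xv := hxuxv
        have hd13 : xu ≠ yt := by
          rintro rfl
          exact (hP3C u huC t htC (Ne.symm htu) xu haxu hadjyt).2 hxuS
        have hd23 : xv ≠ yt := by
          rintro rfl
          exact (hP3C v hvC t htC (Ne.symm htv) xv haxv hadjyt).2 hxvS
        have hxp : xw ≠ p := by rintro rfl; exact ((memD _).mp hpD).2 hxwS
        have hxq : xw ≠ r0 := by rintro rfl; exact ((memD _).mp hr0D).2 hxwS
        exact (overflow hGP hdeg hwSo hxwS haxw hp2 hr2 hxp hxq hpr0
          (by
            intro m hm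
            simp only [List.mem_cons, List.not_mem_nil, or_false, List.mem_singleton] at hm
            rcases hm with rfl | rfl | rfl
            exacts [hb1, hb2, hb3]) hd12 hd13 hd23).elim

end MycHelp

namespace MycHelp

variable {G : SimpleGraph V}

set_option maxHeartbeats 1000000 in
lemma backward [Fintype V] (G : SimpleGraph V) (e : G ≃g Gd 3) :
    Fintype.card V + 1 ≤ gpNumber (Mycielskian G) := by
  classical
  have hcardV : Fintype.card V = 8 := by
    rw [Fintype.card_congr e.toEquiv]
    simp
  set u : Fin 3 → V := fun i => e.symm (Sum.inl i) with hu
  set x : Fin 3 → V := fun i => e.symm (Sum.inr (Sum.inl i)) with hx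
  set wj : Fin 2 → V := fun j => e.symm (Sum.inr (Sum.inr j)) with hw
  have hmap : ∀ a b, G.Adj (e.symm a) (e.symm b) ↔ (Gd 3).Adj a b :=
    fun a b => e.symm.map_adj_iff
  have gd1 : ∀ i j : Fin 3, ¬ (Gd 3).Adj (Sum.inl i) (Sum.inl j) := by decide
  have gd2 : ∀ i j : Fin 3, (Gd 3).Adj (Sum.inl i) (Sum.inr (Sum.inl j)) ↔ i = j := by decide
  have gd3 : ∀ i j : Fin 3, i ≠ j → (Gd 3).Adj (Sum.inr (Sum.inl i)) (Sum.inr (Sum.inl j)) := by decide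
  have gd4 : ∀ (i : Fin 3) (j : Fin 2), (Gd 3).Adj (Sum.inl i) (Sum.inr (Sum.inr j)) := by decide
  have hGadj_uu : ∀ i j : Fin 3, ¬ G.Adj (u i) (u j) := fun i j h => gd1 i j ((hmap _ _).mp h)
  have hGadj_ux : ∀ i j : Fin 3, G.Adj (u i) (x j) ↔ i = j := fun i j => (hmap _ _).trans (gd2 i j)
  have hGadj_xx : ∀ i j : Fin 3, i ≠ j → G.Adj (x i) (x j) := fun i j hij => (hmap _ _).mpr (gd3 i j hij)
  have hGadj_uw : ∀ (i : Fin 3) (j : Fin 2), G.Adj (u i) (wj j) := fun i j => (hmap _ _).mpr (gd4 i j)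
  have hinj : Function.Injective (e.symm : Fin 3 ⊕ (Fin 3 ⊕ Fin 2) → V) := EquivLike.injective e.symm
  have hu_ne : ∀ i j : Fin 3, i ≠ j → u i ≠ u j := by
    intro i j hij h
    have := hinj h
    simp only [Sum.inl.injEq] at this
    exact hij this
  have hux_ne : ∀ i j : Fin 3, u i ≠ x j := by
    intro i j h
    have := hinj h
    simp at this
  have hx_ne : ∀ i j : Fin 3, i ≠ j → x i ≠ x j := by
    intro i j hij h
    have := hinj h
    simp only [Sum.inr.injEq, Sum.inl.injEq] at this
    exact hij this
  set S : Set (Option (V ⊕ V)) := {oV (u 0), oV (u 1), oV (u 2), tV (u 0), tV (u 1), tV (u 2), tV (x 0), tV (x 1), tV (x 2)} with hS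
  have memS : ∀ z, z ∈ S ↔ (z = oV (u 0) ∨ z = oV (u 1) ∨ z = oV (u 2) ∨ z = tV (u 0) ∨
      z = tV (u 1) ∨ z = tV (u 2) ∨ z = tV (x 0) ∨ z = tV (x 1) ∨ z = tV (x 2)) := by
    intro z
    simp [hS, Set.mem_insert_iff]
  -- distance facts
  have hd_oo : ∀ i j : Fin 3, i ≠ j → (Mycielskian G).dist (oV (u i)) (oV (u j)) = 2 := by
    intro i j hij
    exact dist_eq_of_lb (SimpleGraph.Walk.cons (adj_oo.mpr (hGadj_uw i 0))
      (SimpleGraph.Walk.cons (adj_oo.mpr (hGadj_uw j 0).symm) SimpleGraph.Walk.nil)) (by simp)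
      (two_le_length (by simp [hu_ne i j hij]) (by simp only [adj_oo]; exact hGadj_uu i j))
  have hd_ot_u : ∀ i j : Fin 3, (Mycielskian G).dist (oV (u i)) (tV (u j)) = 2 := by
    intro i j
    exact dist_eq_of_lb (SimpleGraph.Walk.cons (adj_oo.mpr (hGadj_uw i 0))
      (SimpleGraph.Walk.cons (adj_ot.mpr (hGadj_uw j 0).symm) SimpleGraph.Walk.nil)) (by simp)
      (two_le_length (by simp) (by simp only [adj_ot]; exact hGadj_uu i j))
  have hd_ot_x : ∀ i j : Fin 3, i ≠ j → (Mycielskian G).dist (oV (u i)) (tV (x j)) = 2 := by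
    intro i j hij
    have hnadj : ¬ (Mycielskian G).Adj (oV (u i)) (tV (x j)) := by
      simp only [adj_ot]
      exact fun h => hij ((hGadj_ux i j).mp h)
    exact dist_eq_of_lb (SimpleGraph.Walk.cons (adj_oo.mpr ((hGadj_ux i i).mpr rfl))
      (SimpleGraph.Walk.cons (adj_ot.mpr (hGadj_xx i j hij)) SimpleGraph.Walk.nil)) (by simp)
      (two_le_length (by simp) hnadj)
  have hd_tt : ∀ y z : V, y ≠ z → (Mycielskian G).dist (tV y) (tV z) = 2 := by
    intro y z hyz
    exact dist_eq_of_lb (SimpleGraph.Walk.cons adj_ts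
      (SimpleGraph.Walk.cons adj_st SimpleGraph.Walk.nil)) (by simp)
      (two_le_length (by simp [hyz]) (by simp))
  -- every member of S has at most one S-neighbour
  have hA1 : ∀ a ∈ S, ∀ i, (Mycielskian G).Adj a (oV (u i)) → a = tV (x i) := by
    intro a ha i hadj
    rcases (memS a).mp ha with rfl|rfl|rfl|rfl|rfl|rfl|rfl|rfl|rfl
    · exact absurd (adj_oo.mp hadj) (hGadj_uu 0 i)
    · exact absurd (adj_oo.mp hadj) (hGadj_uu 1 i)
    · exact absurd (adj_oo.mp hadj) (hGadj_uu 2 i)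
    · exact absurd (adj_to.mp hadj) (hGadj_uu i 0)
    · exact absurd (adj_to.mp hadj) (hGadj_uu i 1)
    · exact absurd (adj_to.mp hadj) (hGadj_uu i 2)
    · have := (hGadj_ux i 0).mp (adj_to.mp hadj); rw [this]
    · have := (hGadj_ux i 1).mp (adj_to.mp hadj); rw [this]
    · have := (hGadj_ux i 2).mp (adj_to.mp hadj); rw [this]
  have hA2 : ∀ a ∈ S, ∀ i, ¬ (Mycielskian G).Adj a (tV (u i)) := by
    intro a ha i hadj
    rcases (memS a).mp ha with rfl|rfl|rfl|rfl|rfl|rfl|rfl|rfl|rfl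
    · exact (hGadj_uu 0 i) (adj_ot.mp hadj)
    · exact (hGadj_uu 1 i) (adj_ot.mp hadj)
    · exact (hGadj_uu 2 i) (adj_ot.mp hadj)
    all_goals exact adj_tt hadj
  have hA3 : ∀ a ∈ S, ∀ i, (Mycielskian G).Adj a (tV (x i)) → a = oV (u i) := by
    intro a ha i hadj
    rcases (memS a).mp ha with rfl|rfl|rfl|rfl|rfl|rfl|rfl|rfl|rfl
    · have := (hGadj_ux 0 i).mp (adj_ot.mp hadj); rw [this]
    · have := (hGadj_ux 1 i).mp (adj_ot.mp hadj); rw [this]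
    · have := (hGadj_ux 2 i).mp (adj_ot.mp hadj); rw [this]
    all_goals exact absurd hadj adj_tt
  have hkey : ∀ m ∈ S, ∀ a ∈ S, ∀ b ∈ S, a ≠ b →
      (Mycielskian G).Adj a m → (Mycielskian G).Adj m b → False := by
    intro m hm a ha b hb hab h1 h2
    rcases (memS m).mp hm with rfl|rfl|rfl|rfl|rfl|rfl|rfl|rfl|rfl
    · exact hab ((hA1 a ha 0 h1).trans (hA1 b hb 0 h2.symm).symm)
    · exact hab ((hA1 a ha 1 h1).trans (hA1 b hb 1 h2.symm).symm)
    · exact hab ((hA1 a ha 2 h1).trans (hA1 b hb 2 h2.symm).symm)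
    · exact hA2 a ha 0 h1
    · exact hA2 a ha 1 h1
    · exact hA2 a ha 2 h1
    · exact hab ((hA3 a ha 0 h1).trans (hA3 b hb 0 h2.symm).symm)
    · exact hab ((hA3 a ha 1 h1).trans (hA3 b hb 1 h2.symm).symm)
    · exact hab ((hA3 a ha 2 h1).trans (hA3 b hb 2 h2.symm).symm)
  have hdist2 : ∀ a ∈ S, ∀ b ∈ S, a ≠ b → ¬ (Mycielskian G).Adj a b →
      (Mycielskian G).dist a b = 2 := by
    intro a ha b hb hab hadj
    rcases (memS a).mp ha with rfl|rfl|rfl|rfl|rfl|rfl|rfl|rfl|rfl <;>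
      rcases (memS b).mp hb with rfl|rfl|rfl|rfl|rfl|rfl|rfl|rfl|rfl
    · exact absurd rfl hab
    · exact hd_oo 0 1 (by decide)
    · exact hd_oo 0 2 (by decide)
    · exact hd_ot_u 0 0
    · exact hd_ot_u 0 1
    · exact hd_ot_u 0 2
    · exact absurd (adj_ot.mpr ((hGadj_ux 0 0).mpr rfl)) hadj
    · exact hd_ot_x 0 1 (by decide)
    · exact hd_ot_x 0 2 (by decide)
    · exact hd_oo 1 0 (by decide)
    · exact absurd rfl hab
    · exact hd_oo 1 2 (by decide)
    · exact hd_ot_u 1 0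
    · exact hd_ot_u 1 1
    · exact hd_ot_u 1 2
    · exact hd_ot_x 1 0 (by decide)
    · exact absurd (adj_ot.mpr ((hGadj_ux 1 1).mpr rfl)) hadj
    · exact hd_ot_x 1 2 (by decide)
    · exact hd_oo 2 0 (by decide)
    · exact hd_oo 2 1 (by decide)
    · exact absurd rfl hab
    · exact hd_ot_u 2 0
    · exact hd_ot_u 2 1
    · exact hd_ot_u 2 2
    · exact hd_ot_x 2 0 (by decide)
    · exact hd_ot_x 2 1 (by decide)
    · exact absurd (adj_ot.mpr ((hGadj_ux 2 2).mpr rfl)) hadj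
    · rw [SimpleGraph.dist_comm]; exact hd_ot_u 0 0
    · rw [SimpleGraph.dist_comm]; exact hd_ot_u 1 0
    · rw [SimpleGraph.dist_comm]; exact hd_ot_u 2 0
    · exact absurd rfl hab
    · exact hd_tt _ _ (hu_ne 0 1 (by decide))
    · exact hd_tt _ _ (hu_ne 0 2 (by decide))
    · exact hd_tt _ _ (hux_ne 0 0)
    · exact hd_tt _ _ (hux_ne 0 1)
    · exact hd_tt _ _ (hux_ne 0 2)
    · rw [SimpleGraph.dist_comm]; exact hd_ot_u 0 1
    · rw [SimpleGraph.dist_comm]; exact hd_ot_u 1 1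
    · rw [SimpleGraph.dist_comm]; exact hd_ot_u 2 1
    · exact hd_tt _ _ (hu_ne 1 0 (by decide))
    · exact absurd rfl hab
    · exact hd_tt _ _ (hu_ne 1 2 (by decide))
    · exact hd_tt _ _ (hux_ne 1 0)
    · exact hd_tt _ _ (hux_ne 1 1)
    · exact hd_tt _ _ (hux_ne 1 2)
    · rw [SimpleGraph.dist_comm]; exact hd_ot_u 0 2
    · rw [SimpleGraph.dist_comm]; exact hd_ot_u 1 2
    · rw [SimpleGraph.dist_comm]; exact hd_ot_u 2 2
    · exact hd_tt _ _ (hu_ne 2 0 (by decide))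
    · exact hd_tt _ _ (hu_ne 2 1 (by decide))
    · exact absurd rfl hab
    · exact hd_tt _ _ (hux_ne 2 0)
    · exact hd_tt _ _ (hux_ne 2 1)
    · exact hd_tt _ _ (hux_ne 2 2)
    · exact absurd (adj_to.mpr ((hGadj_ux 0 0).mpr rfl)) hadj
    · rw [SimpleGraph.dist_comm]; exact hd_ot_x 1 0 (by decide)
    · rw [SimpleGraph.dist_comm]; exact hd_ot_x 2 0 (by decide)
    · exact hd_tt _ _ (Ne.symm (hux_ne 0 0))
    · exact hd_tt _ _ (Ne.symm (hux_ne 1 0))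
    · exact hd_tt _ _ (Ne.symm (hux_ne 2 0))
    · exact absurd rfl hab
    · exact hd_tt _ _ (hx_ne 0 1 (by decide))
    · exact hd_tt _ _ (hx_ne 0 2 (by decide))
    · rw [SimpleGraph.dist_comm]; exact hd_ot_x 0 1 (by decide)
    · exact absurd (adj_to.mpr ((hGadj_ux 1 1).mpr rfl)) hadj
    · rw [SimpleGraph.dist_comm]; exact hd_ot_x 2 1 (by decide)
    · exact hd_tt _ _ (Ne.symm (hux_ne 0 1))
    · exact hd_tt _ _ (Ne.symm (hux_ne 1 1))
    · exact hd_tt _ _ (Ne.symm (hux_ne 2 1))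
    · exact hd_tt _ _ (hx_ne 1 0 (by decide))
    · exact absurd rfl hab
    · exact hd_tt _ _ (hx_ne 1 2 (by decide))
    · rw [SimpleGraph.dist_comm]; exact hd_ot_x 0 2 (by decide)
    · rw [SimpleGraph.dist_comm]; exact hd_ot_x 1 2 (by decide)
    · exact absurd (adj_to.mpr ((hGadj_ux 2 2).mpr rfl)) hadj
    · exact hd_tt _ _ (Ne.symm (hux_ne 0 2))
    · exact hd_tt _ _ (Ne.symm (hux_ne 1 2))
    · exact hd_tt _ _ (Ne.symm (hux_ne 2 2))
    · exact hd_tt _ _ (hx_ne 2 0 (by decide))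
    · exact hd_tt _ _ (hx_ne 2 1 (by decide))
    · exact absurd rfl hab
  have hGPS : IsGPSet (Mycielskian G) S := by
    intro a ha b hb p hp z hz hzs
    by_cases hab : a = b
    · subst hab
      rw [SimpleGraph.dist_self] at hp
      cases p with
      | nil =>
        simp only [SimpleGraph.Walk.support_nil, List.mem_singleton] at hzs
        exact Or.inl hzs
      | cons h q => simp at hp
    · by_cases hadj : (Mycielskian G).Adj a b
      · have hd : (Mycielskian G).dist a b = 1 := SimpleGraph.dist_eq_one_iff_adj.mpr hadj
        rw [hd] at hp
        exact support_of_length_one p hp z hzs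
      · have hd := hdist2 a ha b hb hab hadj
        rw [hd] at hp
        obtain ⟨m, h1, h2, hsup⟩ := length_two_struct p hp
        rw [hsup] at hzs
        simp only [List.mem_cons, List.mem_singleton, List.not_mem_nil, or_false] at hzs
        rcases hzs with rfl | rfl | rfl
        · exact Or.inl rfl
        · exact ((hkey z hz a ha b hb hab h1 h2).elim)
        · exact Or.inr rfl
  have hncard : S.ncard = 9 := by
    rw [hS]
    rw [Set.ncard_insert_of_notMem (by simp [hu_ne, hux_ne, hx_ne]) (Set.toFinite _),
        Set.ncard_insert_of_notMem (by simp [hu_ne, hux_ne, hx_ne]) (Set.toFinite _),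
        Set.ncard_insert_of_notMem (by simp [hu_ne, hux_ne, hx_ne]) (Set.toFinite _),
        Set.ncard_insert_of_notMem (by simp [hu_ne, hux_ne, hx_ne]) (Set.toFinite _),
        Set.ncard_insert_of_notMem (by simp [hu_ne, hux_ne, hx_ne]) (Set.toFinite _),
        Set.ncard_insert_of_notMem (by simp [hu_ne, hux_ne, hx_ne]) (Set.toFinite _),
        Set.ncard_insert_of_notMem (by simp [hu_ne, hux_ne, hx_ne]) (Set.toFinite _),
        Set.ncard_insert_of_notMem (by simp [hu_ne, hux_ne, hx_ne]) (Set.toFinite _),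
        Set.ncard_singleton]
  have hbdd : BddAbove {k | ∃ S' : Set (Option (V ⊕ V)), IsGPSet (Mycielskian G) S' ∧ S'.ncard = k} := by
    refine ⟨Fintype.card (Option (V ⊕ V)), fun k hk => ?_⟩
    obtain ⟨S', _, rfl⟩ := hk
    calc S'.ncard ≤ (Set.univ : Set (Option (V ⊕ V))).ncard :=
          Set.ncard_le_ncard (Set.subset_univ _) Set.finite_univ
    _ = Fintype.card (Option (V ⊕ V)) := by rw [Set.ncard_univ, Nat.card_eq_fintype_card]
  have hmem : (9 : ℕ) ∈ {k | ∃ S' : Set (Option (V ⊕ V)), IsGPSet (Mycielskian G) S' ∧ S'.ncard = k} :=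
    ⟨S, hGPS, hncard⟩
  have : (9 : ℕ) ≤ gpNumber (Mycielskian G) := le_csSup hbdd hmem
  omega

end MycHelp


/-- A non-complete cubic graph `G` of order `n` satisfies
`gp(μ(G)) ≥ n + 1` if and only if `G` is isomorphic to the graph `G(3)`. -/
theorem gpNumber_mycielskian_cubic [Fintype V] (G : SimpleGraph V)
    (hne : G ≠ ⊤) (hreg : IsRegularDeg G 3) :
    Fintype.card V + 1 ≤ gpNumber (Mycielskian G) ↔ Nonempty (G ≃g Gd 3) := by
  classical
  constructor
  · intro h
    have hdeg : ∀ z : V, (G.neighborFinset z).card = 3 := by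
      intro z
      have h1 := hreg z
      rw [Set.ncard_eq_toFinset_card'] at h1
      rwa [SimpleGraph.neighborFinset_def]
    have hne0 : {k | ∃ S : Set (Option (V ⊕ V)), IsGPSet (Mycielskian G) S ∧ S.ncard = k}.Nonempty :=
      ⟨0, ∅, fun u hu => (Set.notMem_empty u hu).elim, Set.ncard_empty _⟩
    have hbdd : BddAbove {k | ∃ S : Set (Option (V ⊕ V)), IsGPSet (Mycielskian G) S ∧ S.ncard = k} := by
      refine ⟨Fintype.card (Option (V ⊕ V)), fun k hk => ?_⟩
      obtain ⟨S', _, rfl⟩ := hk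
      calc S'.ncard ≤ (Set.univ : Set (Option (V ⊕ V))).ncard :=
            Set.ncard_le_ncard (Set.subset_univ _) Set.finite_univ
      _ = Fintype.card (Option (V ⊕ V)) := by rw [Set.ncard_univ, Nat.card_eq_fintype_card]
    have hsup := Nat.sSup_mem hne0 hbdd
    obtain ⟨S, hGPS, hncard⟩ := hsup
    have hcard : Fintype.card V + 1 ≤ S.ncard := by
      rw [hncard]
      exact h
    exact MycHelp.forward hne hdeg hGPS hcard
  · rintro ⟨e⟩
    exact MycHelp.backward G e
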